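/- arXiv:2408.16741 — 12 statements merged into one kernel-verified Lean document; each statement's English description precedes it below -/
import Mathlib

section
/- Let D ∈ M_{k×l}(ℝ) be a non-branching matrix with no zero columns. Then there exist matrices R ∈ M_{k×l}(ℝ) and V ∈ M_{l×l}(ℝ) with R = D·V such that: V is upper-triangular with all entries in {−1,0,1} and all diagonal entries in {−1,1}; the non-zero columns of R are linearly independent over ℝ; the supports of those columns of V that have more than one non-zero entry are pairwise disjoint; and for every index i ∈ {1,…,l}, the i-th column of V has more than one non-zero entry if and only if the i-th column of R is the zero vector. -/
open scoped Classical

/-- A real matrix is *non-branching* if all its entries lie in `{-1, 0, 1}` and every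
row has at most two non-zero entries. -/
def NonBranching {k l : ℕ} (D : Matrix (Fin k) (Fin l) ℝ) : Prop :=
  (∀ i j, D i j = -1 ∨ D i j = 0 ∨ D i j = 1) ∧
    ∀ i : Fin k, (Finset.univ.filter fun j => D i j ≠ 0).card ≤ 2

/-- The `j`-th column of a matrix, as a vector. -/
def col {k l : ℕ} (M : Matrix (Fin k) (Fin l) ℝ) (j : Fin l) : Fin k → ℝ :=
  fun i => M i j

/-- The number of non-zero entries of the `j`-th column (the cardinality of its support). -/
noncomputable def suppCard {k l : ℕ} (M : Matrix (Fin k) (Fin l) ℝ) (j : Fin l) : ℕ :=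
  (Finset.univ.filter fun i => M i j ≠ 0).card

/-- `R = D * V` is a *weak column reduction* of `D`:
`V` is upper-triangular with entries in `{-1,0,1}` and diagonal entries in `{-1,1}`,
the non-zero columns of `R` are linearly independent, the supports of the columns of `V`
with more than one non-zero entry are pairwise disjoint, and the `i`-th column of `V` has
more than one non-zero entry iff the `i`-th column of `R` is zero. -/
def WeakColumnReduction {k l : ℕ} (D R : Matrix (Fin k) (Fin l) ℝ)
    (V : Matrix (Fin l) (Fin l) ℝ) : Prop :=
  R = D * V ∧
  (∀ i j : Fin l, j < i → V i j = 0) ∧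
  (∀ i j : Fin l, V i j = -1 ∨ V i j = 0 ∨ V i j = 1) ∧
  (∀ i : Fin l, V i i = -1 ∨ V i i = 1) ∧
  (LinearIndependent ℝ fun j : {j : Fin l // col R j ≠ 0} => col R j.1) ∧
  (∀ j₁ j₂ : Fin l, j₁ ≠ j₂ → 1 < suppCard V j₁ → 1 < suppCard V j₂ →
    Disjoint (Finset.univ.filter fun i => V i j₁ ≠ 0)
      (Finset.univ.filter fun i => V i j₂ ≠ 0)) ∧
  (∀ j : Fin l, 1 < suppCard V j ↔ col R j = 0)

namespace Stmt0Aux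

noncomputable def suppF {l : ℕ} (w : Fin l → ℝ) : Finset (Fin l) :=
  Finset.univ.filter fun j => w j ≠ 0

lemma mem_suppF {l : ℕ} {w : Fin l → ℝ} {j : Fin l} : j ∈ suppF w ↔ w j ≠ 0 := by
  simp [suppF]

lemma sign_cases (x : ℝ) :
    (x < 0 ∧ Real.sign x = -1) ∨ (x = 0 ∧ Real.sign x = 0) ∨ (0 < x ∧ Real.sign x = 1) := by
  rcases lt_trichotomy x 0 with h | h | h
  · exact Or.inl ⟨h, Real.sign_of_neg h⟩
  · exact Or.inr (Or.inl ⟨h, by simp [h]⟩)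
  · exact Or.inr (Or.inr ⟨h, Real.sign_of_pos h⟩)

lemma sign_mem (x : ℝ) : Real.sign x = -1 ∨ Real.sign x = 0 ∨ Real.sign x = 1 := by
  rcases sign_cases x with ⟨_, h⟩ | ⟨_, h⟩ | ⟨_, h⟩ <;> simp [h]

lemma pair_sign {d1 d2 a b : ℝ} (hd1 : d1 = -1 ∨ d1 = 1) (hd2 : d2 = -1 ∨ d2 = 1)
    (h : d1 * a + d2 * b = 0) : d1 * Real.sign a + d2 * Real.sign b = 0 := by
  rcases sign_cases a with ⟨h1, s1⟩ | ⟨h1, s1⟩ | ⟨h1, s1⟩ <;>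
    rcases sign_cases b with ⟨h2, s2⟩ | ⟨h2, s2⟩ | ⟨h2, s2⟩ <;>
    rw [s1, s2] <;>
    rcases hd1 with e | e <;> subst e <;> rcases hd2 with f | f <;> subst f <;> linarith

variable {k l : ℕ} {D : Matrix (Fin k) (Fin l) ℝ}

def NB (D : Matrix (Fin k) (Fin l) ℝ) : Prop :=
  (∀ i j, D i j = -1 ∨ D i j = 0 ∨ D i j = 1) ∧
    ∀ i : Fin k, (Finset.univ.filter fun j => D i j ≠ 0).card ≤ 2

lemma mulVec_apply (u : Fin l → ℝ) (i : Fin k) :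
    D.mulVec u i = ∑ m, D i m * u m := rfl

lemma row_eq_zero (hD : NB D) {i : Fin k} {a b : Fin l}
    (ha : D i a ≠ 0) (hb : D i b ≠ 0) (hab : a ≠ b) {m : Fin l}
    (hma : m ≠ a) (hmb : m ≠ b) : D i m = 0 := by
  by_contra hm
  have hsub : ({a, b, m} : Finset (Fin l)) ⊆ Finset.univ.filter fun j => D i j ≠ 0 := by
    intro x hx
    simp only [Finset.mem_insert, Finset.mem_singleton] at hx
    rcases hx with h | h | h <;> subst h <;> simp [ha, hb, hm]
  have hcard : ({a, b, m} : Finset (Fin l)).card = 3 :=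
    Finset.card_eq_three.mpr ⟨a, b, m, hab, Ne.symm hma, Ne.symm hmb, rfl⟩
  have := Finset.card_le_card hsub
  rw [hcard] at this
  have := hD.2 i
  omega

lemma sum_row_pair (hD : NB D) {i : Fin k} {a b : Fin l}
    (ha : D i a ≠ 0) (hb : D i b ≠ 0) (hab : a ≠ b) (x : Fin l → ℝ) :
    ∑ m, D i m * x m = D i a * x a + D i b * x b := by
  have h := Finset.sum_subset (Finset.subset_univ ({a, b} : Finset (Fin l)))
    (f := fun m => D i m * x m) ?_
  · rw [← h, Finset.sum_pair hab]
  · intro m _ hm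
    simp only [Finset.mem_insert, Finset.mem_singleton, not_or] at hm
    show D i m * x m = 0
    rw [row_eq_zero hD ha hb hab hm.1 hm.2, zero_mul]

lemma sign_ker (hD : NB D) {u : Fin l → ℝ} (hu : D.mulVec u = 0) :
    D.mulVec (fun j => Real.sign (u j)) = 0 := by
  funext i
  have hrow : ∑ m, D i m * u m = 0 := by
    have := congrFun hu i; rwa [mulVec_apply] at this
  rw [mulVec_apply, Pi.zero_apply]
  set S : Finset (Fin l) := Finset.univ.filter (fun j => D i j ≠ 0 ∧ u j ≠ 0) with hS
  have hSsub : ∀ {j : Fin l}, j ∈ S ↔ D i j ≠ 0 ∧ u j ≠ 0 := by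
    intro j; simp [hS]
  have hout : ∀ m ∉ S, D i m * u m = 0 := by
    intro m hm
    rcases not_and_or.mp (fun h => hm (hSsub.mpr h)) with h | h
    · rw [not_not.mp h, zero_mul]
    · rw [not_not.mp h, mul_zero]
  have houts : ∀ m ∉ S, D i m * Real.sign (u m) = 0 := by
    intro m hm
    rcases not_and_or.mp (fun h => hm (hSsub.mpr h)) with h | h
    · rw [not_not.mp h, zero_mul]
    · rw [not_not.mp h, Real.sign_zero, mul_zero]
  have hredu : ∑ m ∈ S, D i m * u m = 0 := by
    rw [Finset.sum_subset (Finset.subset_univ S) (fun m _ hm => hout m hm)]; exact hrow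
  have hreds : (∑ m, D i m * Real.sign (u m)) = ∑ m ∈ S, D i m * Real.sign (u m) :=
    (Finset.sum_subset (Finset.subset_univ S) (fun m _ hm => houts m hm)).symm
  rw [hreds]
  have hScard : S.card ≤ 2 := by
    have hsub2 : S ⊆ Finset.univ.filter (fun j => D i j ≠ 0) := by
      intro x hx; simp only [Finset.mem_filter]; exact ⟨Finset.mem_univ x, (hSsub.mp hx).1⟩
    exact le_trans (Finset.card_le_card hsub2) (hD.2 i)
  interval_cases h : S.card
  · rw [Finset.card_eq_zero.mp h, Finset.sum_empty]
  · obtain ⟨a, ha⟩ := Finset.card_eq_one.mp h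
    exfalso
    rw [ha, Finset.sum_singleton] at hredu
    have := hSsub.mp (ha ▸ Finset.mem_singleton_self a)
    exact mul_ne_zero this.1 this.2 hredu
  · obtain ⟨a, b, hab, hS2⟩ := Finset.card_eq_two.mp h
    have haS := hSsub.mp (hS2 ▸ Finset.mem_insert_self a {b})
    have hbS := hSsub.mp (hS2 ▸ Finset.mem_insert_of_mem (Finset.mem_singleton_self b))
    rw [hS2, Finset.sum_pair hab] at hredu ⊢
    have hda : D i a = -1 ∨ D i a = 1 := by
      rcases hD.1 i a with h' | h' | h' <;> [exact Or.inl h'; exact absurd h' haS.1;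
        exact Or.inr h']
    have hdb : D i b = -1 ∨ D i b = 1 := by
      rcases hD.1 i b with h' | h' | h' <;> [exact Or.inl h'; exact absurd h' hbS.1;
        exact Or.inr h']
    exact pair_sign hda hdb hredu

lemma KB (hD : NB D) :
    ∀ n : ℕ, ∀ T : Finset (Fin l), Tᶜ.card ≤ n →
    ∃ B : Finset (Fin l → ℝ),
      (∀ w ∈ B, ∀ i, w i = -1 ∨ w i = 0 ∨ w i = 1) ∧
      (∀ w ∈ B, D.mulVec w = 0) ∧
      (∀ w ∈ B, w ≠ 0) ∧
      (∀ w ∈ B, ∀ j ∈ T, w j = 0) ∧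
      (∀ w ∈ B, ∀ w' ∈ B, w ≠ w' → ∀ j, w j = 0 ∨ w' j = 0) ∧
      (∀ u, D.mulVec u = 0 → (∀ j ∈ T, u j = 0) → u ∈ Submodule.span ℝ (B : Set (Fin l → ℝ))) := by
  intro n
  induction n with
  | zero =>
    intro T hT
    refine ⟨∅, by simp, by simp, by simp, by simp, by simp, ?_⟩
    intro u hu huT
    have hTuniv : ∀ j : Fin l, j ∈ T := by
      intro j
      by_contra hj
      have hjc : j ∈ Tᶜ := Finset.mem_compl.mpr hj
      have : Tᶜ.card = 0 := le_antisymm hT (Nat.zero_le _)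
      rw [Finset.card_eq_zero.mp this] at hjc
      exact absurd hjc (Finset.notMem_empty j)
    have hu0 : u = 0 := funext fun j => huT j (hTuniv j)
    simp [hu0]
  | succ n ih =>
    intro T hT
    by_cases hK : ∀ u, D.mulVec u = 0 → (∀ j ∈ T, u j = 0) → u = 0
    · refine ⟨∅, by simp, by simp, by simp, by simp, by simp, ?_⟩
      intro u hu huT
      simp [hK u hu huT]
    push_neg at hK
    obtain ⟨u₀, hu₀k, hu₀T, hu₀⟩ := hK
    have hex : ∃ c : ℕ, ∃ u : Fin l → ℝ,
        D.mulVec u = 0 ∧ (∀ j ∈ T, u j = 0) ∧ u ≠ 0 ∧ (suppF u).card = c :=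
      ⟨_, u₀, hu₀k, hu₀T, hu₀, rfl⟩
    obtain ⟨u₁, hu₁k, hu₁T, hu₁ne, hu₁card⟩ := Nat.find_spec hex
    have hmin : ∀ v : Fin l → ℝ, D.mulVec v = 0 → (∀ j ∈ T, v j = 0) → v ≠ 0 →
        Nat.find hex ≤ (suppF v).card := fun v h1 h2 h3 =>
      Nat.find_min' hex ⟨v, h1, h2, h3, rfl⟩
    -- the sign vector w
    set w : Fin l → ℝ := fun j => Real.sign (u₁ j) with hwdef
    have hwz : ∀ j, w j = 0 ↔ u₁ j = 0 := fun j => Real.sign_eq_zero_iff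
    have hwsupp : suppF w = suppF u₁ := by
      ext j; simp only [mem_suppF]; exact not_congr (hwz j)
    have hwk : D.mulVec w = 0 := sign_ker hD hu₁k
    have hwT : ∀ j ∈ T, w j = 0 := fun j hj => (hwz j).mpr (hu₁T j hj)
    have hwne : w ≠ 0 := by
      intro h
      apply hu₁ne
      funext j
      have := congrFun h j
      exact (hwz j).mp this
    have hwmem : ∀ i, w i = -1 ∨ w i = 0 ∨ w i = 1 := fun i => sign_mem (u₁ i)
    have hwcard : (suppF w).card = Nat.find hex := by rw [hwsupp, hu₁card]
    have hwsq : ∀ j ∈ suppF w, w j * w j = 1 := by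
      intro j hj
      have hj' := mem_suppF.mp hj
      rcases hwmem j with h | h | h <;> rw [h] <;> norm_num
      exact absurd h hj'
    -- connectivity
    set Link : Fin l → Fin l → Prop := fun a b =>
      a ∈ suppF w ∧ b ∈ suppF w ∧ a ≠ b ∧ ∃ i, D i a ≠ 0 ∧ D i b ≠ 0 with hLdef
    obtain ⟨j₀, hj₀⟩ : ∃ j₀, j₀ ∈ suppF w := by
      obtain ⟨j, hj⟩ := Function.ne_iff.mp hwne
      exact ⟨j, mem_suppF.mpr hj⟩
    set A : Finset (Fin l) := (suppF w).filter (fun j => Relation.ReflTransGen Link j₀ j)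
      with hAdef
    have hAsub : A ⊆ suppF w := Finset.filter_subset _ _
    have hj₀A : j₀ ∈ A := Finset.mem_filter.mpr ⟨hj₀, Relation.ReflTransGen.refl⟩
    set v : Fin l → ℝ := fun j => if j ∈ A then w j else 0 with hvdef
    have hvk : D.mulVec v = 0 := by
      funext i
      rw [mulVec_apply, Pi.zero_apply]
      by_cases hA : ∃ a ∈ A, D i a ≠ 0
      · obtain ⟨a, haA, hia⟩ := hA
        have hterm : ∀ m, D i m * v m = D i m * w m := by
          intro m
          by_cases hm : m ∈ A
          · simp [hvdef, hm]
          · have hzero : D i m * w m = 0 := by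
              by_contra hcon
              have hDm : D i m ≠ 0 := left_ne_zero_of_mul hcon
              have hwm : w m ≠ 0 := right_ne_zero_of_mul hcon
              have hma : a ≠ m := fun h' => hm (h' ▸ haA)
              have hlink : Link a m :=
                ⟨hAsub haA, mem_suppF.mpr hwm, hma, i, hia, hDm⟩
              have hreach : Relation.ReflTransGen Link j₀ m :=
                ((Finset.mem_filter.mp haA).2).tail hlink
              exact hm (Finset.mem_filter.mpr ⟨mem_suppF.mpr hwm, hreach⟩)
            rw [hzero]
            simp [hvdef, hm]
        rw [Finset.sum_congr rfl (fun m _ => hterm m)]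
        have := congrFun hwk i
        rwa [mulVec_apply] at this
      · push_neg at hA
        apply Finset.sum_eq_zero
        intro m _
        by_cases hm : m ∈ A
        · rw [hA m hm, zero_mul]
        · simp [hvdef, hm]
    have hvT : ∀ j ∈ T, v j = 0 := by
      intro j hj
      by_cases hm : j ∈ A
      · simp only [hvdef, if_pos hm]; exact hwT j hj
      · simp [hvdef, hm]
    have hvne : v ≠ 0 := by
      intro h
      have := congrFun h j₀
      simp only [hvdef, if_pos hj₀A, Pi.zero_apply] at this
      exact mem_suppF.mp hj₀ this
    have hvsupp : suppF v ⊆ A := by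
      intro j hj
      have hj' := mem_suppF.mp hj
      by_contra hm
      simp [hvdef, hm] at hj'
    have hAall : ∀ j ∈ suppF w, Relation.ReflTransGen Link j₀ j := by
      have h1 : Nat.find hex ≤ (suppF v).card := hmin v hvk hvT hvne
      have h2 : suppF v ⊆ suppF w := subset_trans hvsupp hAsub
      have h3 : suppF v = suppF w := by
        apply Finset.eq_of_subset_of_card_le h2
        rw [hwcard]; exact h1
      intro j hj
      rw [← h3] at hj
      exact (Finset.mem_filter.mp (hvsupp hj)).2
    -- rigidity
    have hrigid : ∀ u : Fin l → ℝ, D.mulVec u = 0 → ∀ j ∈ suppF w,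
        u j = (u j₀ * w j₀) * w j := by
      intro u hu j hj
      have hstep : ∀ p q : Fin l, Link p q → u p * w j₀ = u j₀ * w p →
          u q * w j₀ = u j₀ * w q := by
        intro p q hlink ihp
        obtain ⟨hpw, hqw, hpq, i, hip, hiq⟩ := hlink
        have heu : D i p * u p + D i q * u q = 0 := by
          rw [← sum_row_pair hD hip hiq hpq u]
          have := congrFun hu i; rwa [mulVec_apply] at this
        have hew : D i p * w p + D i q * w q = 0 := by
          rw [← sum_row_pair hD hip hiq hpq w]
          have := congrFun hwk i; rwa [mulVec_apply] at this
        have hcross : u q * w p = u p * w q := by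
          apply mul_left_cancel₀ hiq
          linear_combination w p * heu - u p * hew
        have hwp : w p ≠ 0 := mem_suppF.mp hpw
        apply mul_left_cancel₀ hwp
        linear_combination w j₀ * hcross + w q * ihp
      have hprop : ∀ b, Relation.ReflTransGen Link j₀ b → u b * w j₀ = u j₀ * w b := by
        intro b hb
        induction hb with
        | refl => ring
        | tail hsteps hlink ihp =>
          exact hstep _ _ hlink ihp
      have hq := hprop j (hAall j hj)
      have hsq := hwsq j₀ hj₀
      linear_combination w j₀ * hq - u j * hsq
    -- recurse
    set T' : Finset (Fin l) := T ∪ suppF w with hT'def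
    have hj₀T : j₀ ∉ T := fun h => (mem_suppF.mp hj₀) (hwT j₀ h)
    have hT' : T'ᶜ.card ≤ n := by
      have hsub : T'ᶜ ⊆ Tᶜ.erase j₀ := by
        intro x hx
        rw [Finset.mem_compl, hT'def, Finset.mem_union, not_or] at hx
        refine Finset.mem_erase.mpr ⟨?_, Finset.mem_compl.mpr hx.1⟩
        intro h
        exact hx.2 (h ▸ hj₀)
      have := Finset.card_le_card hsub
      rw [Finset.card_erase_of_mem (Finset.mem_compl.mpr hj₀T)] at this
      omega
    obtain ⟨B', hB1, hB2, hB3, hB4, hB5, hB6⟩ := ih T' hT'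
    refine ⟨insert w B', ?_, ?_, ?_, ?_, ?_, ?_⟩
    · intro w' hw'
      rcases Finset.mem_insert.mp hw' with h | h
      · subst h; exact hwmem
      · exact hB1 w' h
    · intro w' hw'
      rcases Finset.mem_insert.mp hw' with h | h
      · subst h; exact hwk
      · exact hB2 w' h
    · intro w' hw'
      rcases Finset.mem_insert.mp hw' with h | h
      · subst h; exact hwne
      · exact hB3 w' h
    · intro w' hw' j hj
      rcases Finset.mem_insert.mp hw' with h | h
      · subst h; exact hwT j hj
      · exact hB4 w' h j (Finset.mem_union_left _ hj)
    · intro w1 hw1 w2 hw2 hne j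
      rcases Finset.mem_insert.mp hw1 with h1 | h1 <;>
        rcases Finset.mem_insert.mp hw2 with h2 | h2
      · exact absurd (h1.trans h2.symm) hne
      · subst h1
        by_cases hj : w j = 0
        · exact Or.inl hj
        · exact Or.inr (hB4 w2 h2 j (Finset.mem_union_right _ (mem_suppF.mpr hj)))
      · subst h2
        by_cases hj : w j = 0
        · exact Or.inr hj
        · exact Or.inl (hB4 w1 h1 j (Finset.mem_union_right _ (mem_suppF.mpr hj)))
      · exact hB5 w1 h1 w2 h2 hne j
    · intro u hu huT
      set c : ℝ := u j₀ * w j₀ with hcdef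
      have hker : D.mulVec (u - c • w) = 0 := by
        rw [Matrix.mulVec_sub, Matrix.mulVec_smul, hu, hwk]
        simp
      have hvanish : ∀ j ∈ T', (u - c • w) j = 0 := by
        intro j hj
        rcases Finset.mem_union.mp hj with h | h
        · simp [huT j h, hwT j h]
        · have := hrigid u hu j h
          simp [Pi.sub_apply, Pi.smul_apply, this, hcdef]
      have hmem' := hB6 (u - c • w) hker hvanish
      have hwmemspan : w ∈ Submodule.span ℝ ((insert w B' : Finset (Fin l → ℝ)) :
          Set (Fin l → ℝ)) := Submodule.subset_span (by simp)
      have hmono : Submodule.span ℝ ((B' : Finset (Fin l → ℝ)) : Set (Fin l → ℝ)) ≤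
          Submodule.span ℝ ((insert w B' : Finset (Fin l → ℝ)) : Set (Fin l → ℝ)) := by
        apply Submodule.span_mono
        intro x hx
        simp only [Finset.coe_insert, Set.mem_insert_iff]
        exact Or.inr hx
      have : u = (u - c • w) + c • w := by ring_nf
      rw [this]
      exact Submodule.add_mem _ (hmono hmem') (Submodule.smul_mem _ c hwmemspan)

end Stmt0Aux

open Stmt0Aux

/-- Every non-branching real matrix with no zero columns admits a weak
column reduction. -/
theorem stmt0 {k l : ℕ} (D : Matrix (Fin k) (Fin l) ℝ)
    (hD : NonBranching D) (hcols : ∀ j, col D j ≠ 0) :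
    ∃ (R : Matrix (Fin k) (Fin l) ℝ) (V : Matrix (Fin l) (Fin l) ℝ),
      WeakColumnReduction D R V := by
  classical
  have hDNB : Stmt0Aux.NB D := ⟨hD.1, hD.2⟩
  obtain ⟨B, hB1, hB2, hB3, _hB4, hB5, hB6⟩ :=
    Stmt0Aux.KB hDNB l ∅ (by simp)
  have hB6' : ∀ u : Fin l → ℝ, D.mulVec u = 0 →
      u ∈ Submodule.span ℝ (B : Set (Fin l → ℝ)) :=
    fun u hu => hB6 u hu (by simp)
  -- every element of B has at least 2 non-zero entries
  have hcard2 : ∀ w ∈ B, 2 ≤ (suppF w).card := by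
    intro w hw
    obtain ⟨a, ha⟩ : ∃ a, a ∈ suppF w := by
      obtain ⟨a, ha⟩ := Function.ne_iff.mp (hB3 w hw)
      exact ⟨a, mem_suppF.mpr ha⟩
    by_contra hcon
    push_neg at hcon
    have hone : ∀ x ∈ suppF w, ∀ y ∈ suppF w, x = y :=
      Finset.card_le_one.mp (by omega)
    have hDa : ∀ i, D i a = 0 := by
      intro i
      have hz := congrFun (hB2 w hw) i
      rw [mulVec_apply] at hz
      rw [Finset.sum_eq_single a (fun m _ hm => by
        have hwm : w m = 0 := by
          by_contra hwm
          exact hm (hone m (mem_suppF.mpr hwm) a ha)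
        rw [hwm, mul_zero]) (fun h => absurd (Finset.mem_univ a) h)] at hz
      exact (mul_eq_zero.mp hz).resolve_right (mem_suppF.mp ha)
    exact hcols a (funext fun i => hDa i)
  -- max predicate
    -- P w j : j is the maximal element of the support of w
  set P : (Fin l → ℝ) → Fin l → Prop :=
    fun w j => j ∈ suppF w ∧ ∀ m ∈ suppF w, m ≤ j with hPdef
  have hmaxex : ∀ w ∈ B, ∃ j, P w j := by
    intro w hw
    have hne : (suppF w).Nonempty := Finset.card_pos.mp (by have := hcard2 w hw; omega)
    exact ⟨(suppF w).max' hne, Finset.max'_mem _ hne, fun m hm => Finset.le_max' _ m hm⟩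
  have hmaxuniq : ∀ w ∈ B, ∀ w' ∈ B, ∀ j, P w j → P w' j → w = w' := by
    intro w hw w' hw' j h h'
    by_contra hne
    rcases hB5 w hw w' hw' hne j with h0 | h0
    · exact (mem_suppF.mp h.1) h0
    · exact (mem_suppF.mp h'.1) h0
  -- the columns of V
  set φ : Fin l → (Fin l → ℝ) := fun j =>
    if h : ∃ w, w ∈ B ∧ P w j then h.choose else (fun m => if m = j then (1 : ℝ) else 0)
    with hφdef
  have hφpos : ∀ j (h : ∃ w, w ∈ B ∧ P w j), φ j ∈ B ∧ P (φ j) j := by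
    intro j h
    simp only [hφdef, dif_pos h]
    exact ⟨h.choose_spec.1, h.choose_spec.2⟩
  have hφneg : ∀ j, ¬(∃ w, w ∈ B ∧ P w j) → φ j = fun m => if m = j then (1 : ℝ) else 0 := by
    intro j h
    simp only [hφdef, dif_neg h]
  set V : Matrix (Fin l) (Fin l) ℝ := Matrix.of (fun i j => φ j i) with hVdef
  set R : Matrix (Fin k) (Fin l) ℝ := D * V with hRdef
  have hcolR : ∀ j, col R j = D.mulVec (φ j) := by
    intro j
    funext i
    simp only [col, hRdef, Matrix.mul_apply, mulVec_apply, hVdef, Matrix.of_apply]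
  have hsingle : ∀ j : Fin l, D.mulVec (fun m => if m = j then (1 : ℝ) else 0) = col D j := by
    intro j
    funext i
    rw [mulVec_apply]
    rw [Finset.sum_eq_single j (fun m _ hm => by rw [if_neg hm, mul_zero])
      (fun h => absurd (Finset.mem_univ j) h)]
    simp [col]
  have hRpos : ∀ j, (∃ w, w ∈ B ∧ P w j) → col R j = 0 := by
    intro j h
    rw [hcolR j]
    exact hB2 (φ j) (hφpos j h).1
  have hRneg : ∀ j, ¬(∃ w, w ∈ B ∧ P w j) → col R j = col D j := by
    intro j h
    rw [hcolR j, hφneg j h, hsingle j]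
  have hfilter : ∀ j, (Finset.univ.filter fun i => V i j ≠ 0) = suppF (φ j) := by
    intro j
    ext i
    simp [suppF, hVdef, Matrix.of_apply]
  have hsuppCard : ∀ j, suppCard V j = (suppF (φ j)).card := by
    intro j
    rw [suppCard, hfilter]
  have hsuppneg : ∀ j, ¬(∃ w, w ∈ B ∧ P w j) → suppCard V j = 1 := by
    intro j h
    rw [hsuppCard j, hφneg j h]
    have : suppF (fun m => if m = j then (1 : ℝ) else 0) = {j} := by
      ext m
      by_cases hm : m = j <;> simp [suppF, hm]
    rw [this, Finset.card_singleton]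
  refine ⟨R, V, hRdef, ?_, ?_, ?_, ?_, ?_, ?_⟩
  · -- upper triangular
    intro i j hji
    show φ j i = 0
    by_cases h : ∃ w, w ∈ B ∧ P w j
    · by_contra hne
      exact absurd ((hφpos j h).2.2 i (mem_suppF.mpr hne)) (not_le.mpr hji)
    · rw [hφneg j h]
      exact if_neg (fun h' : i = j => absurd h' (ne_of_gt hji))
  · -- entries
    intro i j
    show φ j i = -1 ∨ φ j i = 0 ∨ φ j i = 1
    by_cases h : ∃ w, w ∈ B ∧ P w j
    · exact hB1 (φ j) (hφpos j h).1 i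
    · rw [hφneg j h]
      by_cases hij : i = j <;> simp [hij]
  · -- diagonal
    intro j
    show φ j j = -1 ∨ φ j j = 1
    by_cases h : ∃ w, w ∈ B ∧ P w j
    · obtain ⟨hmem, hmax⟩ := hφpos j h
      have hne := mem_suppF.mp hmax.1
      rcases hB1 (φ j) hmem j with h' | h' | h'
      · exact Or.inl h'
      · exact absurd h' hne
      · exact Or.inr h'
    · rw [hφneg j h]
      simp
  · -- linear independence
    rw [Fintype.linearIndependent_iff]
    intro g hg s
    set u : Fin l → ℝ := ∑ t : {j : Fin l // col R j ≠ 0}, g t • (Pi.single t.1 1 : Fin l → ℝ)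
      with hudef
    have hnotmax : ∀ j : Fin l, col R j ≠ 0 → ¬(∃ w, w ∈ B ∧ P w j) :=
      fun j hj h => hj (hRpos j h)
    have hmv : D.mulVec u = 0 := by
      have h1 : D.mulVec u = ∑ t : {j : Fin l // col R j ≠ 0}, g t • D.mulVec
          (Pi.single t.1 1 : Fin l → ℝ) := by
        rw [hudef]
        rw [show ∀ v : Fin l → ℝ, D.mulVec v = D.mulVecLin v from fun v => rfl]
        rw [map_sum]
        refine Finset.sum_congr rfl (fun t _ => ?_)
        rw [map_smul]
        rfl
      rw [h1]
      have h2 : ∀ t : {j : Fin l // col R j ≠ 0},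
          D.mulVec (Pi.single t.1 1 : Fin l → ℝ) = col R t.1 := by
        intro t
        rw [hRneg t.1 (hnotmax t.1 t.2)]
        funext i
        rw [Matrix.mulVec_single]
        simp [col]
      rw [Finset.sum_congr rfl (fun t _ => by rw [h2 t])]
      exact hg
    obtain ⟨f, -, hf⟩ := Submodule.mem_span_finset.mp (hB6' u hmv)
    have hf0 : ∀ w ∈ B, f w = 0 := by
      intro w hw
      obtain ⟨jw, hjw⟩ := hmaxex w hw
      have hcolRjw : col R jw = 0 := hRpos jw ⟨w, hw, hjw⟩
      have hujw : u jw = 0 := by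
        rw [hudef, Finset.sum_apply]
        apply Finset.sum_eq_zero
        intro t _
        have hne : (t.1 : Fin l) ≠ jw := fun h => t.2 (h ▸ hcolRjw)
        rw [Pi.smul_apply, Pi.single_eq_of_ne (Ne.symm hne), smul_zero]
      have heval : u jw = f w * w jw := by
        rw [← hf, Finset.sum_apply]
        rw [Finset.sum_eq_single_of_mem w hw (fun w' hw' hne => by
          have hz : w' jw = 0 := by
            rcases hB5 w' hw' w hw hne jw with h0 | h0
            · exact h0
            · exact absurd h0 (mem_suppF.mp hjw.1)
          rw [Pi.smul_apply, hz, smul_zero])]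
        rfl
      have hwjw : w jw ≠ 0 := mem_suppF.mp hjw.1
      have hz : f w * w jw = 0 := by rw [← heval]; exact hujw
      rcases mul_eq_zero.mp hz with h | h
      · exact h
      · exact absurd h hwjw
    have hu0 : u = 0 := by
      rw [← hf]
      apply Finset.sum_eq_zero
      intro w hw
      rw [hf0 w hw, zero_smul]
    have hus : u s.1 = g s := by
      rw [hudef, Finset.sum_apply]
      rw [Finset.sum_eq_single s (fun t _ hts => by
        have hne : (t.1 : Fin l) ≠ s.1 := fun h => hts (Subtype.ext h)
        rw [Pi.smul_apply, Pi.single_eq_of_ne (Ne.symm hne), smul_zero])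
        (fun h => absurd (Finset.mem_univ s) h)]
      rw [Pi.smul_apply, Pi.single_eq_same]
      simp
    rw [← hus, hu0]
    rfl
  · -- disjoint supports
    intro j₁ j₂ hne h1 h2
    have hex1 : ∃ w, w ∈ B ∧ P w j₁ := by
      by_contra h
      rw [hsuppneg j₁ h] at h1
      omega
    have hex2 : ∃ w, w ∈ B ∧ P w j₂ := by
      by_contra h
      rw [hsuppneg j₂ h] at h2
      omega
    have hφne : φ j₁ ≠ φ j₂ := by
      intro h
      apply hne
      have hp1 := (hφpos j₁ hex1).2
      have hp2 := (hφpos j₂ hex2).2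
      rw [h] at hp1
      exact le_antisymm (hp2.2 j₁ hp1.1) (hp1.2 j₂ hp2.1)
    rw [Finset.disjoint_left]
    intro i hi1 hi2
    rw [hfilter j₁, mem_suppF] at hi1
    rw [hfilter j₂, mem_suppF] at hi2
    rcases hB5 (φ j₁) (hφpos j₁ hex1).1 (φ j₂) (hφpos j₂ hex2).1 hφne i with h0 | h0
    · exact hi1 h0
    · exact hi2 h0
  · -- iff
    intro j
    by_cases h : ∃ w, w ∈ B ∧ P w j
    · have hz := hRpos j h
      have hc : 2 ≤ (suppF (φ j)).card := hcard2 (φ j) (hφpos j h).1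
      rw [hsuppCard j]
      exact ⟨fun _ => hz, fun _ => by omega⟩
    · have h1 := hsuppneg j h
      have h2 := hRneg j h
      constructor
      · intro hlt
        rw [h1] at hlt
        omega
      · intro h0
        rw [h2] at h0
        exact absurd h0 (hcols j)
end

section
/- Let D ∈ M_{k×l}(ℝ) be a non-branching matrix with no zero columns and let R = D·V be a weak column reduction of D. Then the columns of V that have more than one non-zero entry are pairwise orthogonal with respect to the standard inner product on ℝ^l and form a basis of the kernel of the linear map ℝ^l → ℝ^k given by D. -/
open scoped Classical

/-- If `R = D * V` is a weak column reduction of a non-branching matrix `D`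
with no zero columns, then the columns of `V` with more than one non-zero entry are pairwise
orthogonal and form a basis of the kernel of the linear map `ℝ^l → ℝ^k` given by `D`. -/
theorem stmt1 {k l : ℕ} (D R : Matrix (Fin k) (Fin l) ℝ) (V : Matrix (Fin l) (Fin l) ℝ)
    (hD : NonBranching D) (hcols : ∀ j, col D j ≠ 0)
    (hred : WeakColumnReduction D R V) :
    (∀ j₁ j₂ : Fin l, 1 < suppCard V j₁ → 1 < suppCard V j₂ → j₁ ≠ j₂ →
      ∑ i : Fin l, V i j₁ * V i j₂ = 0) ∧
    (LinearIndependent ℝ fun j : {j : Fin l // 1 < suppCard V j} => col V j.1) ∧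
    Submodule.span ℝ (Set.range fun j : {j : Fin l // 1 < suppCard V j} => col V j.1) =
      LinearMap.ker D.mulVecLin := by
  obtain ⟨hRV, htri, hent, hdiag, hindR, hdisj, hiff⟩ := hred
  have hVunit : IsUnit V := by
    rw [Matrix.isUnit_iff_isUnit_det,
      Matrix.det_of_upperTriangular (show V.BlockTriangular id from fun i j h => htri i j h)]
    refine isUnit_iff_ne_zero.mpr (Finset.prod_ne_zero_iff.mpr fun i _ => ?_)
    rcases hdiag i with h | h <;> rw [h] <;> norm_num
  have hcolR : ∀ j, col R j = D.mulVec (col V j) := by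
    intro j; ext i
    simp [col, hRV, Matrix.mul_apply, Matrix.mulVec, dotProduct]
  -- orthogonality
  have orth : ∀ j₁ j₂ : Fin l, 1 < suppCard V j₁ → 1 < suppCard V j₂ → j₁ ≠ j₂ →
      ∑ i : Fin l, V i j₁ * V i j₂ = 0 := by
    intro j₁ j₂ h1 h2 hne
    apply Finset.sum_eq_zero
    intro i _
    by_contra hne0
    have h₁ : V i j₁ ≠ 0 := fun h => hne0 (by rw [h]; ring)
    have h₂ : V i j₂ ≠ 0 := fun h => hne0 (by rw [h]; ring)
    have hd := hdisj j₁ j₂ hne h1 h2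
    have hi1 : i ∈ Finset.univ.filter fun i => V i j₁ ≠ 0 :=
      Finset.mem_filter.mpr ⟨Finset.mem_univ i, h₁⟩
    have hi2 : i ∈ Finset.univ.filter fun i => V i j₂ ≠ 0 :=
      Finset.mem_filter.mpr ⟨Finset.mem_univ i, h₂⟩
    exact Finset.disjoint_left.mp hd hi1 hi2
  -- linear independence of all columns of V
  have hVcols : LinearIndependent ℝ (fun j : Fin l => col V j) := by
    have h := Matrix.linearIndependent_cols_iff_isUnit.mpr hVunit
    exact h
  have hindV : LinearIndependent ℝ fun j : {j : Fin l // 1 < suppCard V j} => col V j.1 :=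
    hVcols.comp _ Subtype.coe_injective
  refine ⟨orth, hindV, ?_⟩
  -- the span is contained in the kernel
  have hle : Submodule.span ℝ
      (Set.range fun j : {j : Fin l // 1 < suppCard V j} => col V j.1) ≤
      LinearMap.ker D.mulVecLin := by
    rw [Submodule.span_le]
    rintro _ ⟨j, rfl⟩
    have h0 : col R j.1 = 0 := (hiff j.1).mp j.2
    rw [SetLike.mem_coe, LinearMap.mem_ker, Matrix.mulVecLin_apply, ← hcolR, h0]
  -- dimension counting
  have hcard : Fintype.card {j : Fin l // 1 < suppCard V j} =
      Fintype.card {j : Fin l // col R j = 0} :=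
    Fintype.card_congr (Equiv.subtypeEquivRight fun j => hiff j)
  have hsplit : Fintype.card {j : Fin l // col R j = 0} +
      Fintype.card {j : Fin l // col R j ≠ 0} = l := by
    rw [Fintype.card_subtype, Fintype.card_subtype,
      Finset.card_filter_add_card_filter_not]
    simp
  -- range of D equals range of R
  have hrange : LinearMap.range D.mulVecLin = LinearMap.range R.mulVecLin := by
    rw [hRV, Matrix.mulVecLin_mul]
    exact (LinearMap.range_comp_of_range_eq_top _
      (LinearMap.range_eq_top.mpr (by
        have := Matrix.mulVec_surjective_iff_isUnit.mpr hVunit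
        exact this))).symm
  -- finrank of range of R
  have hspanR : Submodule.span ℝ (Set.range R.transpose) =
      Submodule.span ℝ (Set.range fun j : {j : Fin l // col R j ≠ 0} => col R j.1) := by
    apply le_antisymm
    · rw [Submodule.span_le]
      rintro _ ⟨j, rfl⟩
      by_cases h : col R j = 0
      · have : R.transpose j = 0 := h
        rw [this]; exact (Submodule.span ℝ _).zero_mem
      · exact Submodule.subset_span ⟨⟨j, h⟩, rfl⟩
    · rw [Submodule.span_le]
      rintro _ ⟨j, rfl⟩
      exact Submodule.subset_span ⟨j.1, rfl⟩
  have hrkR : Module.finrank ℝ (LinearMap.range R.mulVecLin) =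
      Fintype.card {j : Fin l // col R j ≠ 0} := by
    rw [Matrix.range_mulVecLin, show Set.range R.col = Set.range R.transpose from rfl, hspanR, finrank_span_eq_card hindR]
  have hrn := LinearMap.finrank_range_add_finrank_ker D.mulVecLin
  rw [hrange, hrkR] at hrn
  have hdim : Module.finrank ℝ (Fin l → ℝ) = l := by simp
  rw [hdim] at hrn
  have hspan : Module.finrank ℝ (Submodule.span ℝ
      (Set.range fun j : {j : Fin l // 1 < suppCard V j} => col V j.1)) =
      Fintype.card {j : Fin l // 1 < suppCard V j} := finrank_span_eq_card hindV
  apply Submodule.eq_of_le_of_finrank_le hle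
  omega
end

section
/- Let D ∈ M_{k×l}(ℝ) be any non-branching matrix (zero columns allowed). Then the kernel of the linear map ℝ^l → ℝ^k given by D admits a basis consisting of vectors all of whose entries lie in {−1,0,1} and whose supports are pairwise disjoint; in particular these basis vectors are pairwise orthogonal with respect to the standard inner product. -/
open scoped Classical

namespace Stmt2Aux

variable {k l : ℕ} (D : Matrix (Fin k) (Fin l) ℝ)

lemma mulVec_apply' (x : Fin l → ℝ) (i : Fin k) :
    D.mulVec x i = ∑ j, D i j * x j := rfl

/-- Two columns are adjacent if some row is nonzero at both. -/
def Adjm (a b : Fin l) : Prop := ∃ i, D i a ≠ 0 ∧ D i b ≠ 0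

/-- There is a fixed sign relating coordinates `a` and `b` of every kernel vector. -/
def Sgn (a b : Fin l) : Prop :=
  ∃ s : ℝ, (s = 1 ∨ s = -1) ∧ ∀ x : Fin l → ℝ, D.mulVec x = 0 → x a = s * x b

lemma sgn_refl (a : Fin l) : Sgn D a a :=
  ⟨1, Or.inl rfl, fun x _ => by ring⟩

lemma sgn_symm {a b : Fin l} (h : Sgn D a b) : Sgn D b a := by
  obtain ⟨s, hs, hx⟩ := h
  refine ⟨s, hs, fun x hker => ?_⟩
  have := hx x hker
  rcases hs with rfl | rfl <;> linarith

lemma sgn_trans {a b c : Fin l} (h1 : Sgn D a b) (h2 : Sgn D b c) : Sgn D a c := by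
  obtain ⟨s, hs, hx⟩ := h1
  obtain ⟨t, ht, hy⟩ := h2
  refine ⟨s * t, ?_, fun x hker => ?_⟩
  · rcases hs with rfl | rfl <;> rcases ht with rfl | rfl <;> norm_num
  · rw [hx x hker, hy x hker]; ring

lemma sgn_of_adj (hD : NonBranching D) {a b : Fin l} (h : Adjm D a b) : Sgn D a b := by
  by_cases hab : a = b
  · subst hab; exact sgn_refl D a
  obtain ⟨i, ha, hb⟩ := h
  have ha' : D i a = 1 ∨ D i a = -1 := by
    rcases hD.1 i a with h | h | h
    · exact Or.inr h
    · exact absurd h ha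
    · exact Or.inl h
  have hb' : D i b = 1 ∨ D i b = -1 := by
    rcases hD.1 i b with h | h | h
    · exact Or.inr h
    · exact absurd h hb
    · exact Or.inl h
  have ha1 : D i a * D i a = 1 := by rcases ha' with h | h <;> rw [h] <;> norm_num
  refine ⟨-(D i a * D i b), ?_, fun x hker => ?_⟩
  · rcases ha' with h | h <;> rcases hb' with h' | h' <;> rw [h, h'] <;> norm_num
  · have h0 : ∑ j, D i j * x j = 0 := by
      rw [← mulVec_apply' D x i, hker]; rfl
    set F := Finset.univ.filter fun j => D i j ≠ 0 with hF
    have hsub : ({a, b} : Finset (Fin l)) ⊆ F := by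
      intro j hj
      simp only [Finset.mem_insert, Finset.mem_singleton] at hj
      rcases hj with rfl | rfl <;> simp [hF, ha, hb]
    have hcard : ({a, b} : Finset (Fin l)).card = 2 := Finset.card_pair hab
    have hFe : ({a, b} : Finset (Fin l)) = F :=
      Finset.eq_of_subset_of_card_le hsub (by rw [hcard]; exact hD.2 i)
    have hsum : ∑ j ∈ F, D i j * x j = ∑ j, D i j * x j := by
      apply Finset.sum_filter_of_ne
      intro j _ hj h'
      exact hj (by rw [h', zero_mul])
    have heq : D i a * x a + D i b * x b = 0 := by
      have := hsum.trans h0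
      rw [← hFe, Finset.sum_pair hab] at this
      exact this
    linear_combination D i a * heq - x a * ha1

lemma sgn_of_eqvgen (hD : NonBranching D) {a b : Fin l}
    (h : Relation.EqvGen (Adjm D) a b) : Sgn D a b := by
  induction h with
  | rel _ _ h => exact sgn_of_adj D hD h
  | refl c => exact sgn_refl D c
  | symm _ _ _ ih => exact sgn_symm D ih
  | trans _ _ _ _ _ ih1 ih2 => exact sgn_trans D ih1 ih2

/-- The setoid of signed-graph components. -/
def CSet : Setoid (Fin l) := Relation.EqvGen.setoid (Adjm D)

/-- A coordinate is free if some kernel vector is nonzero there. -/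
def Freev (j : Fin l) : Prop := ∃ x : Fin l → ℝ, D.mulVec x = 0 ∧ x j ≠ 0

lemma freev_congr (hD : NonBranching D) {a b : Fin l}
    (h : Relation.EqvGen (Adjm D) a b) (hf : Freev D a) : Freev D b := by
  obtain ⟨s, hs, hx⟩ := sgn_of_eqvgen D hD h
  obtain ⟨y, hy, hya⟩ := hf
  refine ⟨y, hy, fun h0 => hya ?_⟩
  rw [hx y hy, h0, mul_zero]

/-- The index type: free components. -/
def Idx : Type := {c : Quotient (CSet D) // Freev D c.out}

noncomputable instance : Fintype (Idx D) := by
  unfold Idx; infer_instance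

/-- Chosen witness kernel vector for a free component. -/
noncomputable def wx (t : Idx D) : Fin l → ℝ := t.2.choose

lemma wx_ker (t : Idx D) : D.mulVec (wx D t) = 0 := t.2.choose_spec.1

lemma wx_out (t : Idx D) : wx D t t.1.out ≠ 0 := t.2.choose_spec.2

/-- The basis vector attached to a free component. -/
noncomputable def vb (t : Idx D) : Fin l → ℝ := fun j =>
  if Quotient.mk (CSet D) j = t.1 then wx D t j / wx D t t.1.out else 0

lemma eqv_of_mk_eq {j : Fin l} {t : Idx D} (h : Quotient.mk (CSet D) j = t.1) :
    Relation.EqvGen (Adjm D) t.1.out j := by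
  have h2 : Quotient.mk (CSet D) t.1.out = Quotient.mk (CSet D) j := by
    rw [h, Quotient.out_eq]
  exact Quotient.exact h2

lemma eqv_out (j : Fin l) :
    Relation.EqvGen (Adjm D) (Quotient.mk (CSet D) j).out j := by
  have h2 : Quotient.mk (CSet D) ((Quotient.mk (CSet D) j).out)
      = Quotient.mk (CSet D) j := Quotient.out_eq _
  exact Quotient.exact h2

lemma vb_supp {t : Idx D} {j : Fin l} (h : vb D t j ≠ 0) :
    Quotient.mk (CSet D) j = t.1 := by
  by_contra hc
  exact h (by simp [vb, hc])

lemma vb_out (t : Idx D) : vb D t t.1.out = 1 := by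
  rw [vb, if_pos (Quotient.out_eq _), div_self (wx_out D t)]

lemma vb_entries (hD : NonBranching D) (t : Idx D) (j : Fin l) :
    vb D t j = -1 ∨ vb D t j = 0 ∨ vb D t j = 1 := by
  by_cases h : Quotient.mk (CSet D) j = t.1
  · obtain ⟨s, hs, hx⟩ := sgn_of_eqvgen D hD (eqv_of_mk_eq D h)
    have ho := hx (wx D t) (wx_ker D t)
    have hj : wx D t j ≠ 0 := fun h0 => wx_out D t (by rw [ho, h0, mul_zero])
    rw [vb, if_pos h, ho]
    rcases hs with rfl | rfl
    · right; right; rw [one_mul, div_self hj]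
    · left; field_simp
  · right; left; simp [vb, h]

lemma vb_ker (hD : NonBranching D) (t : Idx D) : D.mulVec (vb D t) = 0 := by
  funext i
  rw [mulVec_apply']
  simp only [Pi.zero_apply]
  by_cases hcase : ∃ a, D i a ≠ 0 ∧ Quotient.mk (CSet D) a = t.1
  · obtain ⟨a, ha, hqa⟩ := hcase
    have key : ∀ j, D i j * vb D t j = (wx D t t.1.out)⁻¹ * (D i j * wx D t j) := by
      intro j
      by_cases hj : D i j = 0
      · rw [hj]; ring
      · have hq : Quotient.mk (CSet D) j = t.1 := by
          rw [← hqa]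
          exact Quotient.sound (Relation.EqvGen.rel j a ⟨i, hj, ha⟩)
        rw [vb, if_pos hq, div_eq_mul_inv]; ring
    rw [Finset.sum_congr rfl fun j _ => key j, ← Finset.mul_sum]
    have h0 : ∑ j, D i j * wx D t j = 0 := by
      rw [← mulVec_apply' D _ i, wx_ker D t]; rfl
    rw [h0]
    ring
  · push_neg at hcase
    apply Finset.sum_eq_zero
    intro j _
    by_cases hj : D i j = 0
    · rw [hj, zero_mul]
    · rw [vb, if_neg (hcase j hj), mul_zero]

lemma vb_eval_out {t s : Idx D} (h : s ≠ t) : vb D s t.1.out = 0 := by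
  by_contra hc
  have := vb_supp D hc
  rw [Quotient.out_eq] at this
  exact h (Subtype.ext this.symm)

lemma vb_span (hD : NonBranching D) (x : Fin l → ℝ) (hx : D.mulVec x = 0) :
    x = ∑ t : Idx D, x t.1.out • vb D t := by
  funext j
  rw [Finset.sum_apply]
  simp only [Pi.smul_apply, smul_eq_mul]
  by_cases hfree : Freev D j
  · have hrel : Relation.EqvGen (Adjm D) (Quotient.mk (CSet D) j).out j := eqv_out D j
    have hfo : Freev D (Quotient.mk (CSet D) j).out :=
      freev_congr D hD (Relation.EqvGen.symm _ _ hrel) hfree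
    set t₀ : Idx D := ⟨Quotient.mk (CSet D) j, hfo⟩ with ht₀
    rw [Finset.sum_eq_single t₀]
    · obtain ⟨s, hs, hsx⟩ := sgn_of_eqvgen D hD hrel
      have hvb : vb D t₀ j = wx D t₀ j / wx D t₀ t₀.1.out := by
        rw [vb, if_pos rfl]
      have hwo := hsx (wx D t₀) (wx_ker D t₀)
      have hwj : wx D t₀ j ≠ 0 := fun h0 => wx_out D t₀ (by rw [hwo, h0, mul_zero])
      have hxo := hsx x hx
      rw [hvb, hwo, hxo]
      rcases hs with rfl | rfl
      · field_simp
      · field_simp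
    · intro t _ ht
      have : vb D t j = 0 := by
        by_contra hc
        exact ht (Subtype.ext (vb_supp D hc).symm)
      rw [this, mul_zero]
    · intro h; exact absurd (Finset.mem_univ t₀) h
  · have hxj : x j = 0 := by
      by_contra hc; exact hfree ⟨x, hx, hc⟩
    rw [hxj]
    symm
    apply Finset.sum_eq_zero
    intro t _
    have : vb D t j = 0 := by
      by_contra hc
      have hq := vb_supp D hc
      have : Relation.EqvGen (Adjm D) t.1.out j := eqv_of_mk_eq D hq
      exact hfree (freev_congr D hD this t.2)
    rw [this, mul_zero]

lemma vb_indep (hD : NonBranching D) :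
    LinearIndependent ℝ (vb D) := by
  rw [Fintype.linearIndependent_iff]
  intro g hg t₀
  have h := congrFun hg t₀.1.out
  rw [Finset.sum_apply] at h
  simp only [Pi.smul_apply, smul_eq_mul, Pi.zero_apply] at h
  rw [Finset.sum_eq_single t₀] at h
  · rwa [vb_out D t₀, mul_one] at h
  · intro t _ ht
    rw [vb_eval_out D ht, mul_zero]
  · intro h'; exact absurd (Finset.mem_univ t₀) h'

end Stmt2Aux

open Stmt2Aux

/-- The kernel of any non-branching matrix `D : M_{k×l}(ℝ)` admits a basis
consisting of vectors with entries in `{-1,0,1}` whose supports are pairwise disjoint; in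
particular the basis vectors are pairwise orthogonal. -/
theorem stmt2 {k l : ℕ} (D : Matrix (Fin k) (Fin l) ℝ) (hD : NonBranching D) :
    ∃ (n : ℕ) (b : Module.Basis (Fin n) ℝ (LinearMap.ker D.mulVecLin)),
      (∀ (t : Fin n) (j : Fin l),
        (b t : Fin l → ℝ) j = -1 ∨ (b t : Fin l → ℝ) j = 0 ∨ (b t : Fin l → ℝ) j = 1) ∧
      (∀ t₁ t₂ : Fin n, t₁ ≠ t₂ →
        Disjoint {j : Fin l | (b t₁ : Fin l → ℝ) j ≠ 0} {j : Fin l | (b t₂ : Fin l → ℝ) j ≠ 0}) ∧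
      (∀ t₁ t₂ : Fin n, t₁ ≠ t₂ →
        ∑ j : Fin l, (b t₁ : Fin l → ℝ) j * (b t₂ : Fin l → ℝ) j = 0) := by
  classical
  set K := LinearMap.ker D.mulVecLin with hK
  have hmem : ∀ t : Idx D, vb D t ∈ K := by
    intro t
    rw [hK, LinearMap.mem_ker, Matrix.mulVecLin_apply, vb_ker D hD]
  set vs : Idx D → K := fun t => ⟨vb D t, hmem t⟩ with hvs
  have hindep : LinearIndependent ℝ vs := by
    apply LinearIndependent.of_comp K.subtype
    have : K.subtype ∘ vs = vb D := rfl
    rw [this]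
    exact vb_indep D hD
  have hspan : ⊤ ≤ Submodule.span ℝ (Set.range vs) := by
    rintro ⟨x, hx⟩ -
    have hx' : D.mulVec x = 0 := by
      rwa [hK, LinearMap.mem_ker, Matrix.mulVecLin_apply] at hx
    have hrep : (⟨x, hx⟩ : K) = ∑ t : Idx D, x t.1.out • vs t := by
      apply Subtype.ext
      have : ((∑ t : Idx D, x t.1.out • vs t : K) : Fin l → ℝ)
          = ∑ t : Idx D, x t.1.out • vb D t := by
        push_cast
        rfl
      rw [this]
      exact vb_span D hD x hx'
    rw [hrep]
    exact Submodule.sum_mem _ fun t _ =>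
      Submodule.smul_mem _ _ (Submodule.subset_span (Set.mem_range_self t))
  let b₀ : Module.Basis (Idx D) ℝ K := Module.Basis.mk hindep hspan
  let e : Idx D ≃ Fin (Fintype.card (Idx D)) := Fintype.equivFin (Idx D)
  refine ⟨Fintype.card (Idx D), b₀.reindex e, ?_, ?_, ?_⟩
  · intro t j
    have hb : b₀.reindex e t = vs (e.symm t) := by
      rw [Module.Basis.reindex_apply, Module.Basis.mk_apply]
    rw [hb]
    exact vb_entries D hD (e.symm t) j
  · intro t₁ t₂ hne
    have hb1 : b₀.reindex e t₁ = vs (e.symm t₁) := by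
      rw [Module.Basis.reindex_apply, Module.Basis.mk_apply]
    have hb2 : b₀.reindex e t₂ = vs (e.symm t₂) := by
      rw [Module.Basis.reindex_apply, Module.Basis.mk_apply]
    rw [hb1, hb2]
    rw [Set.disjoint_left]
    intro j hj1 hj2
    have h1 : Quotient.mk (CSet D) j = (e.symm t₁).1 := vb_supp D hj1
    have h2 : Quotient.mk (CSet D) j = (e.symm t₂).1 := vb_supp D hj2
    exact hne (by
      have : e.symm t₁ = e.symm t₂ := Subtype.ext (h1 ▸ h2 ▸ rfl)
      simpa using congrArg e this)
  · intro t₁ t₂ hne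
    have hb1 : b₀.reindex e t₁ = vs (e.symm t₁) := by
      rw [Module.Basis.reindex_apply, Module.Basis.mk_apply]
    have hb2 : b₀.reindex e t₂ = vs (e.symm t₂) := by
      rw [Module.Basis.reindex_apply, Module.Basis.mk_apply]
    rw [hb1, hb2]
    apply Finset.sum_eq_zero
    intro j _
    by_cases h1 : vb D (e.symm t₁) j = 0
    · rw [show ((vs (e.symm t₁) : K) : Fin l → ℝ) j = vb D (e.symm t₁) j from rfl, h1, zero_mul]
    · by_cases h2 : vb D (e.symm t₂) j = 0
      · rw [show ((vs (e.symm t₂) : K) : Fin l → ℝ) j = vb D (e.symm t₂) j from rfl, h2, mul_zero]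
      · exfalso
        have hq1 := vb_supp D h1
        have hq2 := vb_supp D h2
        exact hne (by
          have : e.symm t₁ = e.symm t₂ := Subtype.ext (hq1 ▸ hq2 ▸ rfl)
          simpa using congrArg e this)
end

section
/- Let D ∈ M_{k×l}(ℝ) be a regular matrix with no zero rows and no zero columns; that is, every row of D contains exactly one entry equal to 1, exactly one entry equal to −1, and all other entries 0. Then for every connected component C of the column graph of D, the sum of the columns of D indexed by C is the zero vector: Σ_{j∈C} D(:,j) = 0. -/
open scoped Classical

/-- The *column graph* of a matrix `D`: the simple graph on the column indices in which
two distinct columns are adjacent iff some row has a non-zero entry in both columns. -/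
def columnGraph {k l : ℕ} (D : Matrix (Fin k) (Fin l) ℝ) : SimpleGraph (Fin l) where
  Adj j₁ j₂ := j₁ ≠ j₂ ∧ ∃ i : Fin k, D i j₁ ≠ 0 ∧ D i j₂ ≠ 0
  symm := by
    constructor
    intro a b h
    exact ⟨h.1.symm, h.2.imp fun i hi => ⟨hi.2, hi.1⟩⟩
  loopless := by
    constructor
    intro a h
    exact h.1 rfl

/-- Let `D` be a regular matrix with no zero rows and no zero columns
(every row contains exactly one `1`, exactly one `-1`, and zeros elsewhere).  Then the sum
of the columns of `D` over any connected component of the column graph of `D` is zero. -/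
theorem stmt3 {k l : ℕ} (D : Matrix (Fin k) (Fin l) ℝ)
    (hrow : ∀ i : Fin k, ∃ j₁ j₂ : Fin l, j₁ ≠ j₂ ∧ D i j₁ = 1 ∧ D i j₂ = -1 ∧
      ∀ j : Fin l, j ≠ j₁ → j ≠ j₂ → D i j = 0)
    (hcols : ∀ j, col D j ≠ 0) :
    ∀ j : Fin l,
      ∑ j' ∈ Finset.univ.filter (fun j' => (columnGraph D).Reachable j j'), col D j' = 0 := by
  intro j
  funext i
  simp only [Finset.sum_apply, col, Pi.zero_apply]
  obtain ⟨j₁, j₂, hne, h1, h2, h0⟩ := hrow i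
  have hadj : (columnGraph D).Adj j₁ j₂ :=
    ⟨hne, i, by rw [h1]; norm_num, by rw [h2]; norm_num⟩
  set S := Finset.univ.filter (fun j' => (columnGraph D).Reachable j j') with hS
  by_cases hr : (columnGraph D).Reachable j j₁
  · have hm1 : j₁ ∈ S := by simp [hS, hr]
    have hm2 : j₂ ∈ S := by simp [hS, hr.trans hadj.reachable]
    have hsub : ({j₁, j₂} : Finset (Fin l)) ⊆ S := by
      intro x hx
      rcases Finset.mem_insert.mp hx with h | h
      · exact h ▸ hm1
      · exact (Finset.mem_singleton.mp h) ▸ hm2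
    rw [← Finset.sum_subset hsub (by
      intro x _ hx
      simp only [Finset.mem_insert, Finset.mem_singleton, not_or] at hx
      exact h0 x hx.1 hx.2)]
    rw [Finset.sum_pair hne, h1, h2]; ring
  · refine Finset.sum_eq_zero fun x hx => ?_
    have hxr : (columnGraph D).Reachable j x := by
      simpa [hS] using hx
    refine h0 x (fun h => hr (h ▸ hxr)) (fun h => hr ((h ▸ hxr).trans hadj.symm.reachable))
end

section
/- Let D ∈ M_{k×l}(ℝ) be a regular matrix with no zero rows and no zero columns (so every row of D contains exactly one 1 and exactly one −1). Let C₁,…,C_r be the connected components of the column graph of D and let mᵢ denote the largest column index in Cᵢ. Define U ∈ M_{l×l}(ℝ) by U(j,j) = 1 for all j, U(j,mᵢ) = 1 for all j ∈ Cᵢ and each 1 ≤ i ≤ r, and all other entries 0 (so U is upper triangular with 1's on the diagonal). Then the j-th column of D·U is the zero vector if and only if j ∈ {m₁,…,m_r}, and the non-zero columns of D·U are linearly independent. -/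
open scoped Classical

/-- Let `D` be a regular matrix with no zero rows and no zero columns
(every row contains exactly one `1`, exactly one `-1`, and zeros elsewhere).  Let `U` be the
upper-triangular matrix with `1`s on the diagonal and `U j m = 1` whenever `m` is the largest
column index of the connected component of `j` in the column graph.  Then the `j`-th column
of `D * U` is zero iff `j` is the largest index of its own component, and the non-zero
columns of `D * U` are linearly independent. -/
theorem stmt4 {k l : ℕ} (D : Matrix (Fin k) (Fin l) ℝ)
    (hrow : ∀ i : Fin k, ∃ j₁ j₂ : Fin l, j₁ ≠ j₂ ∧ D i j₁ = 1 ∧ D i j₂ = -1 ∧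
      ∀ j : Fin l, j ≠ j₁ → j ≠ j₂ → D i j = 0)
    (hcols : ∀ j, col D j ≠ 0)
    (U : Matrix (Fin l) (Fin l) ℝ)
    (hU : ∀ j j' : Fin l, U j j' =
      if j = j' ∨ ((columnGraph D).Reachable j j' ∧
          ∀ j'' : Fin l, (columnGraph D).Reachable j j'' → j'' ≤ j') then 1 else 0) :
    (∀ j : Fin l, col (D * U) j = 0 ↔
      ∀ j' : Fin l, (columnGraph D).Reachable j j' → j' ≤ j) ∧
    LinearIndependent ℝ (fun j : {j : Fin l // col (D * U) j ≠ 0} => col (D * U) j.1) := by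
  set G := columnGraph D with hG
  have hUdiag : ∀ j, U j j = 1 := by
    intro j; rw [hU]; simp
  -- Claim A: if j is not the max of its component, column j of D*U equals column j of D
  have claimA : ∀ j : Fin l, ¬ (∀ j', G.Reachable j j' → j' ≤ j) →
      col (D * U) j = col D j := by
    intro j hmax
    funext i
    show (D * U) i j = D i j
    rw [Matrix.mul_apply, Finset.sum_eq_single j]
    · rw [hUdiag, mul_one]
    · intro j' _ hne
      rw [hU]
      rw [if_neg, mul_zero]
      rintro (rfl | ⟨hr, hm⟩)
      · exact hne rfl
      · exact hmax (fun j'' hj'' => hm j'' (hr.trans hj''))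
    · intro h; exact absurd (Finset.mem_univ j) h
  -- Claim B: if j is the max of its component, column j of D*U is zero
  have claimB : ∀ j : Fin l, (∀ j', G.Reachable j j' → j' ≤ j) →
      col (D * U) j = 0 := by
    intro j hmax
    funext i
    show (D * U) i j = 0
    have hUval : ∀ j', U j' j = if G.Reachable j' j then 1 else 0 := by
      intro j'
      rw [hU]
      by_cases hr : G.Reachable j' j
      · rw [if_pos hr, if_pos (Or.inr ⟨hr, fun j'' h'' => hmax j'' (hr.symm.trans h'')⟩)]
      · rw [if_neg hr, if_neg]
        rintro (rfl | ⟨hr', _⟩)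
        · exact hr (SimpleGraph.Reachable.refl _)
        · exact hr hr'
    obtain ⟨j₁, j₂, hne, h1, h2, h0⟩ := hrow i
    have hadj12 : G.Adj j₁ j₂ := ⟨hne, i, by rw [h1]; norm_num, by rw [h2]; norm_num⟩
    have hiff : G.Reachable j₁ j ↔ G.Reachable j₂ j :=
      ⟨fun h => hadj12.symm.reachable.trans h, fun h => hadj12.reachable.trans h⟩
    rw [Matrix.mul_apply,
      ← Finset.sum_subset (Finset.subset_univ ({j₁, j₂} : Finset (Fin l)))
        (fun x _ hx => by
          rw [h0 x (fun h => hx (by simp [h])) (fun h => hx (by simp [h])), zero_mul]),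
      Finset.sum_pair hne, h1, h2, hUval, hUval]
    by_cases hr : G.Reachable j₁ j
    · rw [if_pos hr, if_pos (hiff.mp hr)]; ring
    · rw [if_neg hr, if_neg (fun h => hr (hiff.mpr h))]; ring
  have part1 : ∀ j : Fin l, col (D * U) j = 0 ↔
      ∀ j' : Fin l, G.Reachable j j' → j' ≤ j := by
    intro j
    constructor
    · intro h0
      by_contra hnm
      exact hcols j (by rw [← claimA j hnm]; exact h0)
    · exact claimB j
  refine ⟨part1, ?_⟩
  rw [Fintype.linearIndependent_iff]
  intro g hg
  set c : Fin l → ℝ := fun j => if h : col (D * U) j ≠ 0 then g ⟨j, h⟩ else 0 with hc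
  have hcval : ∀ (j : Fin l) (h : col (D * U) j ≠ 0), c j = g ⟨j, h⟩ := by
    intro j h; rw [hc]; exact dif_pos h
  have hsum : ∑ j : Fin l, c j • col D j = 0 := by
    have e1 : ∀ j : Fin l, c j • col D j = c j • col (D * U) j := by
      intro j
      by_cases h : col (D * U) j ≠ 0
      · have hnm : ¬ (∀ j', G.Reachable j j' → j' ≤ j) := fun hm => h (claimB j hm)
        rw [claimA j hnm]
      · push_neg at h
        have : c j = 0 := by rw [hc]; simp [h]
        rw [this, zero_smul, zero_smul]
    calc ∑ j : Fin l, c j • col D j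
        = ∑ j : Fin l, c j • col (D * U) j := Finset.sum_congr rfl (fun j _ => e1 j)
      _ = ∑ j ∈ Finset.univ.filter (fun j => col (D * U) j ≠ 0), c j • col (D * U) j := by
          refine (Finset.sum_filter_of_ne ?_).symm
          intro x _ hx h0
          exact hx (by rw [h0, smul_zero])
      _ = ∑ j : {j : Fin l // col (D * U) j ≠ 0}, c j.1 • col (D * U) j.1 :=
          Finset.sum_subtype _ (by simp) _
      _ = ∑ j : {j : Fin l // col (D * U) j ≠ 0}, g j • col (D * U) j.1 := by
          refine Finset.sum_congr rfl (fun j _ => ?_)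
          rw [hcval j.1 j.2]
      _ = 0 := hg
  have hrowsum : ∀ i : Fin k, ∑ j : Fin l, c j * D i j = 0 := by
    intro i
    have := congrFun hsum i
    simpa [col, Finset.sum_apply, Pi.smul_apply, smul_eq_mul] using this
  have hadj : ∀ j j' : Fin l, G.Adj j j' → c j = c j' := by
    rintro j j' ⟨hne, i, hji, hji'⟩
    obtain ⟨j₁, j₂, h12, h1, h2, h0⟩ := hrow i
    have hsum2 : c j₁ * D i j₁ + c j₂ * D i j₂ = 0 := by
      rw [← hrowsum i,
        ← Finset.sum_subset (Finset.subset_univ ({j₁, j₂} : Finset (Fin l)))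
          (fun x _ hx => by
            rw [h0 x (fun h => hx (by simp [h])) (fun h => hx (by simp [h])), mul_zero]),
        Finset.sum_pair h12]
    rw [h1, h2] at hsum2
    have hcc : c j₁ = c j₂ := by linarith
    have hj : j = j₁ ∨ j = j₂ := by
      by_contra hcon; push_neg at hcon; exact hji (h0 j hcon.1 hcon.2)
    have hj' : j' = j₁ ∨ j' = j₂ := by
      by_contra hcon; push_neg at hcon; exact hji' (h0 j' hcon.1 hcon.2)
    rcases hj with rfl | rfl <;> rcases hj' with rfl | rfl
    · rfl
    · exact hcc
    · exact hcc.symm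
    · rfl
  have hreach : ∀ j j' : Fin l, G.Reachable j j' → c j = c j' := by
    intro j j' h
    obtain ⟨w⟩ := h
    induction w with
    | nil => rfl
    | cons ha _ ih => exact (hadj _ _ ha).trans ih
  intro jj
  classical
  set S := Finset.univ.filter (fun j' => G.Reachable jj.1 j') with hS
  have hSne : S.Nonempty := ⟨jj.1, by simp only [hS, Finset.mem_filter, Finset.mem_univ, true_and]; exact SimpleGraph.Reachable.refl _⟩
  set m := S.max' hSne with hm
  have hrm : G.Reachable jj.1 m := by
    have := S.max'_mem hSne
    simpa [hS] using this
  have hmmax : ∀ j'' : Fin l, G.Reachable m j'' → j'' ≤ m := by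
    intro j'' h''
    exact S.le_max' j'' (by simp [hS]; exact hrm.trans h'')
  have hcm0 : c m = 0 := by
    have h0 : col (D * U) m = 0 := claimB m hmmax
    rw [hc]; simp [h0]
  have hcj : c jj.1 = 0 := (hreach _ _ hrm).trans hcm0
  rw [hcval jj.1 jj.2] at hcj
  simpa using hcj
end

section
/- Let D ∈ M_{k×l}(ℝ) be a regulable matrix with no zero rows and no zero columns, and let E be any diagonal matrix with diagonal entries in {−1,1} such that D·E is oriented. Let C₁,…,C_r be the connected components of the column graph of D, let mᵢ be the largest column index in Cᵢ, and let U ∈ M_{l×l}(ℝ) be the matrix with U(j,j) = 1 for all j, U(j,mᵢ) = 1 for all j ∈ Cᵢ and each 1 ≤ i ≤ r, and all other entries 0. Then R = D·(E·U) is a weak column reduction of D. -/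
open scoped Classical

/-- A matrix is *oriented* if each of its rows contains at most one entry equal to `1`
and at most one entry equal to `-1`. -/
def Oriented {k l : ℕ} (M : Matrix (Fin k) (Fin l) ℝ) : Prop :=
  ∀ i : Fin k, (Finset.univ.filter fun j => M i j = 1).card ≤ 1 ∧
    (Finset.univ.filter fun j => M i j = -1).card ≤ 1

/-- Each row of `D * diagonal ε` has exactly one `1`, one `-1`, and zeros elsewhere. -/
private lemma rowStruct {k l : ℕ} (D : Matrix (Fin k) (Fin l) ℝ)
    (hD : NonBranching D)
    (hrow2 : ∀ i : Fin k, (Finset.univ.filter fun j => D i j ≠ 0).card = 2 ∨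
      (Finset.univ.filter fun j => D i j ≠ 0).card = 0)
    (hrows : ∀ i : Fin k, (fun j => D i j) ≠ 0)
    (ε : Fin l → ℝ) (hε : ∀ j, ε j = 1 ∨ ε j = -1)
    (hor : Oriented (D * Matrix.diagonal ε)) (i : Fin k) :
    ∃ j₁ j₂ : Fin l, j₁ ≠ j₂ ∧ (D * Matrix.diagonal ε) i j₁ = 1 ∧
      (D * Matrix.diagonal ε) i j₂ = -1 ∧
      ∀ j, j ≠ j₁ → j ≠ j₂ → (D * Matrix.diagonal ε) i j = 0 := by
  have hε0 : ∀ j, ε j ≠ 0 := by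
    intro j; rcases hε j with h | h <;> rw [h] <;> norm_num
  have hDε : ∀ i j, (D * Matrix.diagonal ε) i j = D i j * ε j := by
    intro i j; rw [Matrix.mul_diagonal]
  have h2 : (Finset.univ.filter fun j => D i j ≠ 0).card = 2 := by
    rcases hrow2 i with h | h
    · exact h
    · exfalso
      have hall : ∀ j, D i j = 0 := by
        intro j
        by_contra hj
        have hjmem : j ∈ (Finset.univ.filter fun j => D i j ≠ 0) :=
          Finset.mem_filter.mpr ⟨Finset.mem_univ j, hj⟩
        rw [Finset.card_eq_zero.mp h] at hjmem
        exact absurd hjmem (Finset.notMem_empty j)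
      exact hrows i (funext hall)
  obtain ⟨a, b, hab, hset⟩ := Finset.card_eq_two.mp h2
  have hmem : ∀ j, D i j ≠ 0 ↔ (j = a ∨ j = b) := by
    intro j
    constructor
    · intro hj
      have : j ∈ (Finset.univ.filter fun j => D i j ≠ 0) := by simp [hj]
      rw [hset] at this
      simpa using this
    · intro hj
      have : j ∈ ({a, b} : Finset (Fin l)) := by simpa using hj
      rw [← hset] at this
      simpa using this
  have hDa : D i a ≠ 0 := (hmem a).mpr (Or.inl rfl)
  have hDb : D i b ≠ 0 := (hmem b).mpr (Or.inr rfl)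
  have hval : ∀ j, D i j ≠ 0 →
      (D * Matrix.diagonal ε) i j = 1 ∨ (D * Matrix.diagonal ε) i j = -1 := by
    intro j hj
    rw [hDε]
    rcases hD.1 i j with h | h | h
    · rcases hε j with h' | h' <;> rw [h, h'] <;> norm_num
    · exact absurd h hj
    · rcases hε j with h' | h' <;> rw [h, h'] <;> norm_num
  have hzero : ∀ j, j ≠ a → j ≠ b → (D * Matrix.diagonal ε) i j = 0 := by
    intro j hja hjb
    rw [hDε]
    have : D i j = 0 := by
      by_contra hj
      rcases (hmem j).mp hj with h | h
      · exact hja h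
      · exact hjb h
    rw [this, zero_mul]
  have hne1 : ¬((D * Matrix.diagonal ε) i a = 1 ∧ (D * Matrix.diagonal ε) i b = 1) := by
    rintro ⟨ha, hb⟩
    have hsub : ({a, b} : Finset (Fin l)) ⊆
        Finset.univ.filter fun j => (D * Matrix.diagonal ε) i j = 1 := by
      intro x hx
      rcases Finset.mem_insert.mp hx with h | h
      · subst h; exact Finset.mem_filter.mpr ⟨Finset.mem_univ _, ha⟩
      · have := Finset.mem_singleton.mp h; subst this
        exact Finset.mem_filter.mpr ⟨Finset.mem_univ _, hb⟩
    have := Finset.card_le_card hsub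
    rw [Finset.card_pair hab] at this
    have := (hor i).1
    omega
  have hne2 : ¬((D * Matrix.diagonal ε) i a = -1 ∧ (D * Matrix.diagonal ε) i b = -1) := by
    rintro ⟨ha, hb⟩
    have hsub : ({a, b} : Finset (Fin l)) ⊆
        Finset.univ.filter fun j => (D * Matrix.diagonal ε) i j = -1 := by
      intro x hx
      rcases Finset.mem_insert.mp hx with h | h
      · subst h; exact Finset.mem_filter.mpr ⟨Finset.mem_univ _, ha⟩
      · have := Finset.mem_singleton.mp h; subst this
        exact Finset.mem_filter.mpr ⟨Finset.mem_univ _, hb⟩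
    have := Finset.card_le_card hsub
    rw [Finset.card_pair hab] at this
    have := (hor i).2
    omega
  rcases hval a hDa with ha | ha <;> rcases hval b hDb with hb | hb
  · exact absurd ⟨ha, hb⟩ hne1
  · exact ⟨a, b, hab, ha, hb, hzero⟩
  · exact ⟨b, a, hab.symm, hb, ha, fun j h1 h2 => hzero j h2 h1⟩
  · exact absurd ⟨ha, hb⟩ hne2

/-- Let `D` be a regulable matrix (non-branching, each row with exactly two
or zero non-zero entries, orientable) with no zero rows and no zero columns.  Let `E` be a
diagonal matrix with diagonal entries in `{-1,1}` such that `D * E` is oriented and let `U`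
be the upper-triangular matrix with `1`s on the diagonal and `U j m = 1` whenever `m` is the
largest column index of the component of `j` in the column graph.  Then
`R = D * (E * U)` is a weak column reduction of `D`. -/
theorem stmt5 {k l : ℕ} (D : Matrix (Fin k) (Fin l) ℝ)
    (hD : NonBranching D)
    (hrow2 : ∀ i : Fin k, (Finset.univ.filter fun j => D i j ≠ 0).card = 2 ∨
      (Finset.univ.filter fun j => D i j ≠ 0).card = 0)
    (hrows : ∀ i : Fin k, (fun j => D i j) ≠ 0)
    (hcols : ∀ j, col D j ≠ 0)
    (ε : Fin l → ℝ) (hε : ∀ j, ε j = 1 ∨ ε j = -1)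
    (hor : Oriented (D * Matrix.diagonal ε))
    (U : Matrix (Fin l) (Fin l) ℝ)
    (hU : ∀ j j' : Fin l, U j j' =
      if j = j' ∨ ((columnGraph D).Reachable j j' ∧
          ∀ j'' : Fin l, (columnGraph D).Reachable j j'' → j'' ≤ j') then 1 else 0) :

    WeakColumnReduction D (D * (Matrix.diagonal ε * U)) (Matrix.diagonal ε * U) := by
  classical
  have hε0 : ∀ j, ε j ≠ 0 := by
    intro j; rcases hε j with h | h <;> rw [h] <;> norm_num
  have hDε : ∀ i j, (D * Matrix.diagonal ε) i j = D i j * ε j := by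
    intro i j; rw [Matrix.mul_diagonal]
  have hDεne : ∀ i j, (D * Matrix.diagonal ε) i j ≠ 0 ↔ D i j ≠ 0 := by
    intro i j
    rw [hDε]
    constructor
    · intro h h0; exact h (by rw [h0, zero_mul])
    · exact fun h => mul_ne_zero h (hε0 j)
  -- the largest element of each component
  have hcne : ∀ j : Fin l,
      (Finset.univ.filter fun j' => (columnGraph D).Reachable j j').Nonempty :=
    fun j => ⟨j, Finset.mem_filter.mpr ⟨Finset.mem_univ j, SimpleGraph.Reachable.refl j⟩⟩
  set mx : Fin l → Fin l :=
    fun j => (Finset.univ.filter fun j' => (columnGraph D).Reachable j j').max' (hcne j)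
    with hmxdef
  have hmxR : ∀ j, (columnGraph D).Reachable j (mx j) := by
    intro j
    have := Finset.max'_mem _ (hcne j)
    exact (Finset.mem_filter.mp this).2
  have hmxle : ∀ j j', (columnGraph D).Reachable j j' → j' ≤ mx j := fun j j' h =>
    Finset.le_max' _ _ (Finset.mem_filter.mpr ⟨Finset.mem_univ _, h⟩)
  have hmxcongr : ∀ j j', (columnGraph D).Reachable j j' → mx j = mx j' := by
    intro j j' h
    apply le_antisymm
    · exact hmxle j' _ (h.symm.trans (hmxR j))
    · exact hmxle j _ (h.trans (hmxR j'))
  -- description of U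
  have hUeq : ∀ j j', U j j' =
      if (j = j' ∨ ((columnGraph D).Reachable j j' ∧ mx j' = j')) then 1 else 0 := by
    intro j j'
    rw [hU]
    have hiff : (j = j' ∨ ((columnGraph D).Reachable j j' ∧
        ∀ j'' : Fin l, (columnGraph D).Reachable j j'' → j'' ≤ j'))
        ↔ (j = j' ∨ ((columnGraph D).Reachable j j' ∧ mx j' = j')) := by
      constructor
      · rintro (h | ⟨hr, hmax⟩)
        · exact Or.inl h
        · refine Or.inr ⟨hr, le_antisymm ?_ ?_⟩
          · exact hmax _ (hr.trans (hmxR j'))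
          · exact hmxle j' j' (SimpleGraph.Reachable.refl j')
      · rintro (h | ⟨hr, hmax⟩)
        · exact Or.inl h
        · refine Or.inr ⟨hr, fun j'' hr'' => ?_⟩
          calc j'' ≤ mx j := hmxle j _ hr''
            _ = mx j' := hmxcongr j j' hr
            _ = j' := hmax
    rw [if_congr hiff rfl rfl]
  set V := Matrix.diagonal ε * U with hVdef
  set R := D * V with hRdef
  have hVe : ∀ j j', V j j' =
      if (j = j' ∨ ((columnGraph D).Reachable j j' ∧ mx j' = j')) then ε j else 0 := by
    intro j j'
    rw [hVdef, Matrix.diagonal_mul, hUeq]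
    split
    · rw [mul_one]
    · rw [mul_zero]
  have hVne : ∀ j j', V j j' ≠ 0 ↔
      (j = j' ∨ ((columnGraph D).Reachable j j' ∧ mx j' = j')) := by
    intro j j'
    rw [hVe]
    split
    · next h => simp [h, hε0 j]
    · next h => simp [h]
  have hRe : ∀ i j', R i j' =
      ∑ j ∈ Finset.univ.filter
        (fun j => j = j' ∨ ((columnGraph D).Reachable j j' ∧ mx j' = j')),
        (D * Matrix.diagonal ε) i j := by
    intro i j'
    rw [hRdef, Matrix.mul_apply, Finset.sum_filter]
    apply Finset.sum_congr rfl
    intro j _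
    rw [hVe, hDε]
    split
    · rfl
    · rw [mul_zero]
  -- columns at a maximum are zero
  have hRmax : ∀ j', mx j' = j' → ∀ i, R i j' = 0 := by
    intro j' hj' i
    rw [hRe]
    have hfil : (Finset.univ.filter
        (fun j => j = j' ∨ ((columnGraph D).Reachable j j' ∧ mx j' = j'))) =
        Finset.univ.filter (fun j => (columnGraph D).Reachable j j') := by
      ext j
      simp only [Finset.mem_filter, Finset.mem_univ, true_and]
      constructor
      · rintro (h | ⟨h, _⟩)
        · subst h; exact SimpleGraph.Reachable.refl j
        · exact h
      · intro h; exact Or.inr ⟨h, hj'⟩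
    rw [hfil]
    obtain ⟨j₁, j₂, h12, h1, h2, h0⟩ := rowStruct D hD hrow2 hrows ε hε hor i
    have hadj : (columnGraph D).Adj j₁ j₂ :=
      ⟨h12, i, (hDεne i j₁).mp (by rw [h1]; norm_num),
        (hDεne i j₂).mp (by rw [h2]; norm_num)⟩
    have hiff2 : (columnGraph D).Reachable j₁ j' ↔ (columnGraph D).Reachable j₂ j' :=
      ⟨fun h => hadj.symm.reachable.trans h, fun h => hadj.reachable.trans h⟩
    have hterm : ∀ j ∈ Finset.univ.filter (fun j => (columnGraph D).Reachable j j'),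
        (D * Matrix.diagonal ε) i j =
          (if j = j₁ then (1:ℝ) else 0) + (if j = j₂ then (-1:ℝ) else 0) := by
      intro j _
      by_cases e1 : j = j₁
      · subst e1
        rw [if_pos rfl, if_neg h12, h1]; ring
      · by_cases e2 : j = j₂
        · subst e2
          rw [if_neg e1, if_pos rfl, h2]; ring
        · rw [if_neg e1, if_neg e2, h0 j e1 e2]; ring
    rw [Finset.sum_congr rfl hterm, Finset.sum_add_distrib,
      Finset.sum_ite_eq' _ j₁ (fun _ => (1:ℝ)),
      Finset.sum_ite_eq' _ j₂ (fun _ => (-1:ℝ))]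
    by_cases hmem : j₁ ∈ Finset.univ.filter (fun j => (columnGraph D).Reachable j j')
    · have hmem2 : j₂ ∈ Finset.univ.filter (fun j => (columnGraph D).Reachable j j') := by
        simp only [Finset.mem_filter, Finset.mem_univ, true_and] at hmem ⊢
        exact hiff2.mp hmem
      rw [if_pos hmem, if_pos hmem2]; ring
    · have hmem2 : j₂ ∉ Finset.univ.filter (fun j => (columnGraph D).Reachable j j') := by
        simp only [Finset.mem_filter, Finset.mem_univ, true_and] at hmem ⊢
        exact fun h => hmem (hiff2.mpr h)
      rw [if_neg hmem, if_neg hmem2]; ring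
  -- columns not at a maximum agree with D * diagonal ε
  have hRnonmax : ∀ j', mx j' ≠ j' → ∀ i, R i j' = (D * Matrix.diagonal ε) i j' := by
    intro j' hj' i
    rw [hRe]
    have hfil : (Finset.univ.filter
        (fun j => j = j' ∨ ((columnGraph D).Reachable j j' ∧ mx j' = j'))) = {j'} := by
      ext j
      simp only [Finset.mem_filter, Finset.mem_univ, true_and, Finset.mem_singleton]
      constructor
      · rintro (h | ⟨_, h⟩)
        · exact h
        · exact absurd h hj'
      · intro h; exact Or.inl h
    rw [hfil, Finset.sum_singleton]
  have hRz1 : ∀ j', mx j' = j' → col R j' = 0 := by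
    intro j' h
    funext i
    exact hRmax j' h i
  have hRz2 : ∀ j', mx j' ≠ j' → col R j' ≠ 0 := by
    intro j' h hcol
    obtain ⟨i, hi⟩ := Function.ne_iff.mp (hcols j')
    have hi' : D i j' ≠ 0 := by simpa [col] using hi
    have hz : R i j' = 0 := congrFun hcol i
    rw [hRnonmax j' h i] at hz
    exact (hDεne i j').mpr hi' hz
  -- constancy of linear relations on components
  have hadjc : ∀ (c : Fin l → ℝ),
      (∀ i, ∑ j, c j * (D * Matrix.diagonal ε) i j = 0) →
      ∀ a b, (columnGraph D).Adj a b → c a = c b := by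
    intro c hc a b hab
    obtain ⟨hne', i, hDa, hDb⟩ := hab
    obtain ⟨j₁, j₂, h12, h1, h2, h0⟩ := rowStruct D hD hrow2 hrows ε hε hor i
    have key : c j₁ = c j₂ := by
      have hterm : ∀ j ∈ (Finset.univ : Finset (Fin l)),
          c j * (D * Matrix.diagonal ε) i j =
            (if j = j₁ then c j else 0) + (if j = j₂ then -c j else 0) := by
        intro j _
        by_cases e1 : j = j₁
        · subst e1
          rw [if_pos rfl, if_neg h12, h1]; ring
        · by_cases e2 : j = j₂
          · subst e2
            rw [if_neg e1, if_pos rfl, h2]; ring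
          · rw [if_neg e1, if_neg e2, h0 j e1 e2]; ring
      have := hc i
      rw [Finset.sum_congr rfl hterm, Finset.sum_add_distrib,
        Finset.sum_ite_eq' _ j₁ (fun j => c j),
        Finset.sum_ite_eq' _ j₂ (fun j => -c j),
        if_pos (Finset.mem_univ j₁), if_pos (Finset.mem_univ j₂)] at this
      linarith
    have ha' : a = j₁ ∨ a = j₂ := by
      have hne0 : (D * Matrix.diagonal ε) i a ≠ 0 := (hDεne i a).mpr hDa
      by_contra hcon
      push_neg at hcon
      exact hne0 (h0 a hcon.1 hcon.2)
    have hb' : b = j₁ ∨ b = j₂ := by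
      have hne0 : (D * Matrix.diagonal ε) i b ≠ 0 := (hDεne i b).mpr hDb
      by_contra hcon
      push_neg at hcon
      exact hne0 (h0 b hcon.1 hcon.2)
    rcases ha' with ha' | ha' <;> rcases hb' with hb' | hb' <;> subst ha' <;> subst hb'
    · exact absurd rfl hne'
    · exact key
    · exact key.symm
    · exact absurd rfl hne'
  have hreachc : ∀ (c : Fin l → ℝ),
      (∀ i, ∑ j, c j * (D * Matrix.diagonal ε) i j = 0) →
      ∀ a b, (columnGraph D).Reachable a b → c a = c b := by
    intro c hc a b hr
    obtain ⟨w⟩ := hr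
    induction w with
    | nil => rfl
    | cons h p ih => exact (hadjc c hc _ _ h).trans ih
  -- support of the columns of V
  have hsupp_max : ∀ j', mx j' = j' →
      (Finset.univ.filter fun j => V j j' ≠ 0) =
        Finset.univ.filter fun j => (columnGraph D).Reachable j j' := by
    intro j' hj'
    ext j
    simp only [Finset.mem_filter, Finset.mem_univ, true_and]
    rw [hVne]
    constructor
    · rintro (h | ⟨h, _⟩)
      · subst h; exact SimpleGraph.Reachable.refl j
      · exact h
    · intro h; exact Or.inr ⟨h, hj'⟩
  have hsupp_nonmax : ∀ j', mx j' ≠ j' →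
      (Finset.univ.filter fun j => V j j' ≠ 0) = {j'} := by
    intro j' hj'
    ext j
    simp only [Finset.mem_filter, Finset.mem_univ, true_and, Finset.mem_singleton]
    rw [hVne]
    constructor
    · rintro (h | ⟨_, h⟩)
      · exact h
      · exact absurd h hj'
    · intro h; exact Or.inl h
  have hcard_iff : ∀ j', 1 < suppCard V j' ↔ mx j' = j' := by
    intro j'
    constructor
    · intro h
      by_contra hj'
      rw [suppCard, hsupp_nonmax j' hj'] at h
      simp at h
    · intro hj'
      obtain ⟨i, hi⟩ := Function.ne_iff.mp (hcols j')
      have hi' : D i j' ≠ 0 := by simpa [col] using hi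
      obtain ⟨j₁, j₂, h12, h1, h2, h0⟩ := rowStruct D hD hrow2 hrows ε hε hor i
      have hj'12 : j' = j₁ ∨ j' = j₂ := by
        by_contra hcon
        push_neg at hcon
        exact ((hDεne i j').mpr hi') (h0 j' hcon.1 hcon.2)
      obtain ⟨j'', hj''ne, hj''D⟩ : ∃ j'', j'' ≠ j' ∧ D i j'' ≠ 0 := by
        rcases hj'12 with h | h
        · exact ⟨j₂, by rw [h]; exact fun e => h12 e.symm,
            (hDεne i j₂).mp (by rw [h2]; norm_num)⟩
        · exact ⟨j₁, by rw [h]; exact h12,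
            (hDεne i j₁).mp (by rw [h1]; norm_num)⟩
      have hadj : (columnGraph D).Adj j'' j' := ⟨hj''ne, i, hj''D, hi'⟩
      rw [suppCard, hsupp_max j' hj', Finset.one_lt_card]
      exact ⟨j'', Finset.mem_filter.mpr ⟨Finset.mem_univ _, hadj.reachable⟩,
        j', Finset.mem_filter.mpr ⟨Finset.mem_univ _, SimpleGraph.Reachable.refl j'⟩,
        hj''ne⟩
  refine ⟨hRdef, ?_, ?_, ?_, ?_, ?_, ?_⟩
  · -- upper triangular
    intro i j hji
    rw [hVe, if_neg]
    rintro (h | ⟨hr, hmax⟩)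
    · subst h; exact lt_irrefl _ hji
    · have hle : i ≤ mx i := hmxle i i (SimpleGraph.Reachable.refl i)
      rw [hmxcongr i j hr, hmax] at hle
      exact absurd hji (not_lt.mpr hle)
  · -- entries in {-1,0,1}
    intro i j
    rw [hVe]
    split
    · rcases hε i with h | h
      · rw [h]; right; right; rfl
      · rw [h]; left; rfl
    · right; left; rfl
  · -- diagonal entries
    intro i
    rw [hVe, if_pos (Or.inl rfl)]
    rcases hε i with h | h
    · exact Or.inr h
    · exact Or.inl h
  · -- linear independence
    rw [Fintype.linearIndependent_iff]
    intro g hg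
    set c : Fin l → ℝ := fun j => if h : col R j ≠ 0 then g ⟨j, h⟩ else 0 with hcdef
    have hc0 : ∀ j, col R j = 0 → c j = 0 := by
      intro j h
      rw [hcdef]
      simp [h]
    have hcg : ∀ j (h : col R j ≠ 0), c j = g ⟨j, h⟩ := by
      intro j h
      rw [hcdef]
      simp only [dif_pos h]
    have hsum : ∀ i, ∑ j, c j * R i j = 0 := by
      intro i
      have hgi := congrFun hg i
      simp only [Finset.sum_apply, Pi.smul_apply, smul_eq_mul, Pi.zero_apply, col] at hgi
      calc ∑ j, c j * R i j
          = ∑ j ∈ Finset.univ.filter (fun j => col R j ≠ 0), c j * R i j := by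
            symm
            apply Finset.sum_subset (Finset.filter_subset _ _)
            intro j _ hj
            have hcj : ¬ col R j ≠ 0 := by
              intro h
              exact hj (Finset.mem_filter.mpr ⟨Finset.mem_univ _, h⟩)
            rw [hc0 j (not_not.mp hcj), zero_mul]
        _ = ∑ js : {j : Fin l // col R j ≠ 0}, c js.1 * R i js.1 := by
            rw [Finset.sum_subtype]
            intro x
            simp
        _ = ∑ js : {j : Fin l // col R j ≠ 0}, g js * R i js.1 := by
            apply Finset.sum_congr rfl
            intro js _
            rw [hcg js.1 js.2]
        _ = 0 := hgi
    have hsumε : ∀ i, ∑ j, c j * (D * Matrix.diagonal ε) i j = 0 := by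
      intro i
      rw [← hsum i]
      apply Finset.sum_congr rfl
      intro j _
      by_cases hj : mx j = j
      · rw [hc0 j (hRz1 j hj), zero_mul, zero_mul]
      · rw [hRnonmax j hj i]
    intro js
    obtain ⟨j, hj⟩ := js
    have e1 : c j = c (mx j) := hreachc c hsumε j (mx j) (hmxR j)
    have e2 : c (mx j) = 0 :=
      hc0 _ (hRz1 _ (hmxcongr j (mx j) (hmxR j)).symm)
    rw [← hcg j hj, e1, e2]
  · -- disjoint supports
    intro j₁ j₂ hne' h1 h2
    have hm1 := (hcard_iff j₁).mp h1
    have hm2 := (hcard_iff j₂).mp h2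
    rw [hsupp_max j₁ hm1, hsupp_max j₂ hm2, Finset.disjoint_left]
    intro x hx1 hx2
    have r1 : (columnGraph D).Reachable x j₁ := (Finset.mem_filter.mp hx1).2
    have r2 : (columnGraph D).Reachable x j₂ := (Finset.mem_filter.mp hx2).2
    apply hne'
    calc j₁ = mx j₁ := hm1.symm
      _ = mx x := (hmxcongr x j₁ r1).symm
      _ = mx j₂ := hmxcongr x j₂ r2
      _ = j₂ := hm2
  · -- support size iff zero column
    intro j
    rw [hcard_iff]
    constructor
    · exact hRz1 j
    · intro h
      by_contra hc
      exact hRz2 j hc h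
end

section
/- Let D ∈ M_{k×l}(ℝ) be an irregular matrix (non-branching, with every row containing exactly two or zero non-zero entries, and non-orientable) with no zero rows and no zero columns. If the column graph of D is connected, then D has full column rank, i.e., the columns of D are linearly independent over ℝ. -/
open scoped Classical

/-- An irregular matrix (non-branching, each row with exactly two or zero
non-zero entries, non-orientable) with no zero rows and no zero columns whose column graph is
connected has linearly independent columns. -/
theorem stmt6 {k l : ℕ} (D : Matrix (Fin k) (Fin l) ℝ)
    (hD : NonBranching D)
    (hrow2 : ∀ i : Fin k, (Finset.univ.filter fun j => D i j ≠ 0).card = 2 ∨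
      (Finset.univ.filter fun j => D i j ≠ 0).card = 0)
    (hnonor : ¬ ∃ ε : Fin l → ℝ, (∀ j, ε j = 1 ∨ ε j = -1) ∧
      Oriented (D * Matrix.diagonal ε))
    (hrows : ∀ i : Fin k, (fun j => D i j) ≠ 0)
    (hcols : ∀ j, col D j ≠ 0)
    (hconn : (columnGraph D).Connected) :
    LinearIndependent ℝ (fun j : Fin l => col D j) := by
  classical
  rw [Fintype.linearIndependent_iff]
  intro c hc
  by_contra hne
  push_neg at hne
  obtain ⟨j0, hj0⟩ := hne
  have hsum : ∀ i, ∑ j, D i j * c j = 0 := by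
    intro i
    have h := congrFun hc i
    simpa [col, Finset.sum_apply, mul_comm] using h
  set S : Fin k → Finset (Fin l) := fun i => Finset.univ.filter fun j => D i j ≠ 0 with hS
  have hcard : ∀ i, (S i).card = 2 := by
    intro i
    rcases hrow2 i with h | h
    · exact h
    · exfalso
      apply hrows i
      funext j
      have hSe : S i = ∅ := Finset.card_eq_zero.mp h
      have hj : j ∉ S i := by rw [hSe]; exact Finset.notMem_empty j
      simp only [hS, Finset.mem_filter, Finset.mem_univ, true_and, not_not] at hj
      exact hj
  have hrow_eq : ∀ i a b, a ≠ b → S i = {a, b} → D i a * c a + D i b * c b = 0 := by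
    intro i a b hab hSi
    have h1 : ∑ j ∈ S i, D i j * c j = ∑ j, D i j * c j := by
      rw [hS]
      refine Finset.sum_filter_of_ne ?_
      intro j _ hj h0
      exact hj (by rw [h0, zero_mul])
    rw [hSi, Finset.sum_pair hab] at h1
    rw [h1]; exact hsum i
  have habs1 : ∀ i j, D i j ≠ 0 → |D i j| = 1 := by
    intro i j h
    rcases hD.1 i j with h1 | h1 | h1 <;> simp [h1] at h ⊢
  have hadj : ∀ j₁ j₂, (columnGraph D).Adj j₁ j₂ → |c j₁| = |c j₂| := by
    rintro j₁ j₂ ⟨hne2, i, h1, h2⟩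
    have hsub : ({j₁, j₂} : Finset (Fin l)) ⊆ S i := by
      intro x hx
      simp only [Finset.mem_insert, Finset.mem_singleton] at hx
      rcases hx with rfl | rfl <;> simp [hS, h1, h2]
    have hSi : S i = {j₁, j₂} := by
      refine (Finset.eq_of_subset_of_card_le hsub ?_).symm
      rw [hcard i, Finset.card_insert_of_notMem (by simp [hne2]), Finset.card_singleton]
    have heq := hrow_eq i j₁ j₂ hne2 hSi
    have h3 : D i j₁ * c j₁ = -(D i j₂ * c j₂) := by linarith
    have h4 := congrArg abs h3
    rwa [abs_neg, abs_mul, abs_mul, habs1 i j₁ h1, habs1 i j₂ h2, one_mul, one_mul] at h4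
  have hwalk : ∀ (u v : Fin l) (p : (columnGraph D).Walk u v), |c u| = |c v| := by
    intro u v p
    induction p with
    | nil => rfl
    | cons h _ ih => exact (hadj _ _ h).trans ih
  have hconst : ∀ j, |c j| = |c j0| := by
    intro j
    obtain ⟨p⟩ := hconn.preconnected j j0
    exact hwalk _ _ p
  set t := |c j0| with ht
  have ht0 : (0:ℝ) < t := abs_pos.mpr hj0
  set ε : Fin l → ℝ := fun j => c j / t with hε
  have hεval : ∀ j, ε j = 1 ∨ ε j = -1 := by
    intro j
    rcases (abs_eq (le_of_lt ht0)).mp (hconst j) with h | h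
    · left; rw [hε]; simp only; rw [h]; field_simp
    · right; rw [hε]; simp only; rw [h]; field_simp
  apply hnonor
  refine ⟨ε, hεval, ?_⟩
  intro i
  obtain ⟨a, b, hab, hSi⟩ := Finset.card_eq_two.mp (hcard i)
  have ha : D i a ≠ 0 := by
    have : a ∈ S i := by rw [hSi]; simp
    simpa [hS] using this
  have hb : D i b ≠ 0 := by
    have : b ∈ S i := by rw [hSi]; simp
    simpa [hS] using this
  have heq := hrow_eq i a b hab hSi
  have hx : D i a * ε a + D i b * ε b = 0 := by
    have h5 : D i a * ε a + D i b * ε b = (D i a * c a + D i b * c b) / t := by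
      rw [hε]; field_simp
    rw [h5, heq, zero_div]
  have hu : D i a * ε a = 1 ∨ D i a * ε a = -1 := by
    rcases hD.1 i a with h1 | h1 | h1 <;> rcases hεval a with h2 | h2 <;>
      simp [h1, h2] at ha ⊢
  have hmem : ∀ j, D i j * ε j ≠ 0 → j = a ∨ j = b := by
    intro j hj
    have hj0' : D i j ≠ 0 := fun h => hj (by rw [h, zero_mul])
    have : j ∈ S i := by simp [hS, hj0']
    rw [hSi] at this
    simpa using this
  have hentry : ∀ j, (D * Matrix.diagonal ε) i j = D i j * ε j := by
    intro j; rw [Matrix.mul_diagonal]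
  constructor
  · rw [Finset.card_le_one]
    intro x hx1 y hy1
    simp only [Finset.mem_filter, Finset.mem_univ, true_and, hentry] at hx1 hy1
    have hx' := hmem x (by rw [hx1]; norm_num)
    have hy' := hmem y (by rw [hy1]; norm_num)
    rcases hu with h1 | h1
    · have hbv : D i b * ε b = -1 := by linarith
      rcases hx' with h2 | h2
      · rcases hy' with h3 | h3
        · rw [h2, h3]
        · rw [h3, hbv] at hy1; norm_num at hy1
      · rw [h2, hbv] at hx1; norm_num at hx1
    · rcases hx' with h2 | h2
      · rw [h2, h1] at hx1; norm_num at hx1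
      · rcases hy' with h3 | h3
        · rw [h3, h1] at hy1; norm_num at hy1
        · rw [h2, h3]
  · rw [Finset.card_le_one]
    intro x hx1 y hy1
    simp only [Finset.mem_filter, Finset.mem_univ, true_and, hentry] at hx1 hy1
    have hx' := hmem x (by rw [hx1]; norm_num)
    have hy' := hmem y (by rw [hy1]; norm_num)
    rcases hu with h1 | h1
    · have hbv : D i b * ε b = -1 := by linarith
      rcases hx' with h2 | h2
      · rw [h2, h1] at hx1; norm_num at hx1
      · rcases hy' with h3 | h3
        · rw [h3, h1] at hy1; norm_num at hy1
        · rw [h2, h3]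
    · have hbv : D i b * ε b = 1 := by linarith
      rcases hx' with h2 | h2
      · rcases hy' with h3 | h3
        · rw [h2, h3]
        · rw [h3, hbv] at hy1; norm_num at hy1
      · rw [h2, hbv] at hx1; norm_num at hx1
end

section
/- Let D ∈ M_{k×l}(ℝ) be a non-branching matrix with no zero columns. Call a connected component C of the column graph of D regulable if the submatrix of D consisting of the columns indexed by C has no row with exactly one non-zero entry and is orientable; let C₁,…,C_r be the regulable components and let mᵢ denote the largest column index in Cᵢ. Then there exists a diagonal matrix E with diagonal entries in {−1,1} such that the submatrix of D·E on the columns Cᵢ is oriented for each 1 ≤ i ≤ r, and, defining U ∈ M_{l×l}(ℝ) by U(j,j) = 1 for all j, U(j,mᵢ) = 1 for all j ∈ Cᵢ and each i, and all other entries 0, the factorization R = D·(E·U) is a weak column reduction of D; moreover, the i-th column of R is the zero vector if and only if i ∈ {m₁,…,m_r}. -/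
open scoped Classical

/-- The connected component of `j` in the column graph of `D` is *regulable*: the submatrix
of `D` on the columns of the component has no row with exactly one non-zero entry, and it is
orientable (the columns can be sign-flipped so every row of the submatrix contains at most
one `1` and at most one `-1`). -/
def RegulableComp {k l : ℕ} (D : Matrix (Fin k) (Fin l) ℝ) (j : Fin l) : Prop :=
  (∀ i : Fin k, (Finset.univ.filter fun j' =>
      (columnGraph D).Reachable j j' ∧ D i j' ≠ 0).card ≠ 1) ∧
  ∃ ε : Fin l → ℝ, (∀ j', ε j' = 1 ∨ ε j' = -1) ∧
    ∀ i : Fin k,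
      (Finset.univ.filter fun j' => (columnGraph D).Reachable j j' ∧
        D i j' * ε j' = 1).card ≤ 1 ∧
      (Finset.univ.filter fun j' => (columnGraph D).Reachable j j' ∧
        D i j' * ε j' = -1).card ≤ 1

namespace Stmt8Aux
open Finset
variable {k l : ℕ} (D : Matrix (Fin k) (Fin l) ℝ)

lemma reach_iff {j j' : Fin l} (h : (columnGraph D).Reachable j j') (x : Fin l) :
    (columnGraph D).Reachable j x ↔ (columnGraph D).Reachable j' x :=
  ⟨fun hx => h.symm.trans hx, fun hx => h.trans hx⟩

lemma row_support (hD : NonBranching D) {i : Fin k} {j j' : Fin l} (hjj' : j ≠ j')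
    (hj : D i j ≠ 0) (hj' : D i j' ≠ 0) :
    (univ.filter fun m => D i m ≠ 0) = {j, j'} := by
  refine (Finset.eq_of_subset_of_card_le ?_ ?_).symm
  · intro m hm
    simp only [mem_insert, mem_singleton] at hm
    rcases hm with rfl | rfl <;> simp [hj, hj']
  · calc (univ.filter fun m => D i m ≠ 0).card ≤ 2 := hD.2 i
      _ = ({j, j'} : Finset (Fin l)).card := by
          rw [Finset.card_insert_of_notMem (by simpa using hjj'), Finset.card_singleton]

lemma row_eq (hD : NonBranching D) {b : Fin l → ℝ}
    (hb : ∀ i, ∑ m, D i m * b m = 0) {i : Fin k} {j j' : Fin l} (hjj' : j ≠ j')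
    (hj : D i j ≠ 0) (hj' : D i j' ≠ 0) :
    D i j * b j + D i j' * b j' = 0 := by
  have h1 : ∑ m ∈ (univ.filter fun m => D i m ≠ 0), D i m * b m = 0 := by
    conv_rhs => rw [← hb i]
    refine Finset.sum_subset (filter_subset _ _) ?_
    intro m _ hm
    have hz : D i m = 0 := not_not.mp (fun h => hm (mem_filter.mpr ⟨mem_univ m, h⟩))
    rw [hz, zero_mul]
  rw [row_support D hD hjj' hj hj'] at h1
  rwa [Finset.sum_pair hjj'] at h1

lemma step (hD : NonBranching D) {b : Fin l → ℝ}
    (hb : ∀ i, ∑ m, D i m * b m = 0) {j j' : Fin l}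
    (hadj : (columnGraph D).Adj j j') (h : b j ≠ 0) : b j' ≠ 0 := by
  obtain ⟨hne, i, h1, h2⟩ := hadj
  have he := row_eq D hD hb hne h1 h2
  intro hz
  rw [hz, mul_zero, add_zero] at he
  rcases mul_eq_zero.mp he with h' | h'
  · exact h1 h'
  · exact h h'

lemma reach_ne (hD : NonBranching D) {b : Fin l → ℝ}
    (hb : ∀ i, ∑ m, D i m * b m = 0) {j j' : Fin l}
    (hr : (columnGraph D).Reachable j j') (h : b j ≠ 0) : b j' ≠ 0 := by
  obtain ⟨w⟩ := hr
  induction w with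
  | nil => exact h
  | @cons u v w hadj _ ih => exact ih (step D hD hb hadj h) 

lemma row_reach {i : Fin k} {j₀ j j' : Fin l}
    (hr : (columnGraph D).Reachable j₀ j) (hj : D i j ≠ 0) (hj' : D i j' ≠ 0) :
    (columnGraph D).Reachable j₀ j' := by
  by_cases h : j = j'
  · exact h ▸ hr
  · exact hr.trans (SimpleGraph.Adj.reachable ⟨h, i, hj, hj'⟩)


/-- sign vector of b -/
noncomputable def sgn (b : Fin l → ℝ) : Fin l → ℝ := fun m => if 0 < b m then 1 else -1

lemma sgn_pm (b : Fin l → ℝ) (m : Fin l) : sgn b m = 1 ∨ sgn b m = -1 := by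
  unfold sgn; split <;> simp

lemma sgn_mul_pos {b : Fin l → ℝ} {m : Fin l} (h : b m ≠ 0) : 0 < sgn b m * b m := by
  unfold sgn
  rcases lt_or_gt_of_ne h with h' | h'
  · rw [if_neg (by linarith)]; linarith
  · rw [if_pos h']; linarith

lemma main_card (hD : NonBranching D) {b : Fin l → ℝ}
    (hb : ∀ i, ∑ m, D i m * b m = 0) {j₀ : Fin l} (h0 : b j₀ ≠ 0) (i : Fin k)
    {s : ℝ} (hs : s ≠ 0) :
    (univ.filter fun m => (columnGraph D).Reachable j₀ m ∧ D i m * sgn b m = s).card ≤ 1 := by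
  by_contra hc
  push_neg at hc
  obtain ⟨m₁, hm₁, m₂, hm₂, hne⟩ := Finset.one_lt_card.mp hc
  simp only [mem_filter, mem_univ, true_and] at hm₁ hm₂
  have hD1 : D i m₁ ≠ 0 := fun h => hs (by rw [← hm₁.2, h, zero_mul])
  have hD2 : D i m₂ ≠ 0 := fun h => hs (by rw [← hm₂.2, h, zero_mul])
  have hb1 : b m₁ ≠ 0 := reach_ne D hD hb hm₁.1 h0
  have hb2 : b m₂ ≠ 0 := reach_ne D hD hb hm₂.1 h0
  have he := row_eq D hD hb hne hD1 hD2
  -- D i m = s * sgn b m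
  have key : ∀ m, D i m * sgn b m = s → D i m = s * sgn b m := by
    intro m hm
    have hsq : sgn b m * sgn b m = 1 := by rcases sgn_pm b m with h | h <;> rw [h] <;> norm_num
    calc D i m = D i m * (sgn b m * sgn b m) := by rw [hsq, mul_one]
      _ = (D i m * sgn b m) * sgn b m := by ring
      _ = s * sgn b m := by rw [hm]
  rw [key m₁ hm₁.2, key m₂ hm₂.2] at he
  have hp1 := sgn_mul_pos hb1
  have hp2 := sgn_mul_pos hb2
  have : s * (sgn b m₁ * b m₁ + sgn b m₂ * b m₂) = 0 := by linarith [he]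
  rcases mul_eq_zero.mp this with h | h
  · exact hs h
  · linarith

lemma main_reg (hD : NonBranching D) {b : Fin l → ℝ}
    (hb : ∀ i, ∑ m, D i m * b m = 0) {j₀ : Fin l} (h0 : b j₀ ≠ 0) :
    RegulableComp D j₀ := by
  constructor
  · intro i hcard
    obtain ⟨j, hj⟩ := Finset.card_eq_one.mp hcard
    have hjmem : j ∈ (univ.filter fun j' => (columnGraph D).Reachable j₀ j' ∧ D i j' ≠ 0) := by
      rw [hj]; exact mem_singleton_self j
    simp only [mem_filter, mem_univ, true_and] at hjmem
    have hsub : (univ.filter fun m => D i m ≠ 0) ⊆ {j} := by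
      rw [← hj]
      intro m hm
      simp only [mem_filter, mem_univ, true_and] at hm ⊢
      exact ⟨row_reach D hjmem.1 hjmem.2 hm, hm⟩
    have h1 : ∑ m ∈ (univ.filter fun m => D i m ≠ 0), D i m * b m = 0 := by
      conv_rhs => rw [← hb i]
      refine Finset.sum_subset (filter_subset _ _) ?_
      intro m _ hm
      have hz : D i m = 0 := not_not.mp (fun h => hm (mem_filter.mpr ⟨mem_univ m, h⟩))
      rw [hz, zero_mul]
    have hfe : (univ.filter fun m => D i m ≠ 0) = {j} := by
      apply Finset.Subset.antisymm hsub
      intro m hm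
      rw [mem_singleton] at hm
      subst hm
      exact mem_filter.mpr ⟨mem_univ m, hjmem.2⟩
    rw [hfe, Finset.sum_singleton] at h1
    have hbj : b j ≠ 0 := reach_ne D hD hb hjmem.1 h0
    rcases mul_eq_zero.mp h1 with h | h
    · exact hjmem.2 h
    · exact hbj h
  · exact ⟨sgn b, sgn_pm b, fun i =>
      ⟨main_card D hD hb h0 i one_ne_zero, main_card D hD hb h0 i (by norm_num)⟩⟩


lemma reg_congr {j j' : Fin l} (h : (columnGraph D).Reachable j j') :
    RegulableComp D j → RegulableComp D j' := by
  intro hreg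
  constructor
  · intro i
    have hfe : (univ.filter fun x => (columnGraph D).Reachable j' x ∧ D i x ≠ 0)
        = (univ.filter fun x => (columnGraph D).Reachable j x ∧ D i x ≠ 0) := by
      ext x
      simp only [mem_filter, mem_univ, true_and]
      exact and_congr_left' (reach_iff D h x).symm
    rw [hfe]
    exact hreg.1 i
  · obtain ⟨ε, hε, hor⟩ := hreg.2
    refine ⟨ε, hε, fun i => ?_⟩
    have hfe : ∀ s : ℝ, (univ.filter fun x => (columnGraph D).Reachable j' x ∧ D i x * ε x = s)
        = (univ.filter fun x => (columnGraph D).Reachable j x ∧ D i x * ε x = s) := by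
      intro s
      ext x
      simp only [mem_filter, mem_univ, true_and]
      exact and_congr_left' (reach_iff D h x).symm
    rw [hfe 1, hfe (-1)]
    exact hor i

lemma reg_congr_iff {j j' : Fin l} (h : (columnGraph D).Reachable j j') :
    RegulableComp D j ↔ RegulableComp D j' :=
  ⟨reg_congr D h, reg_congr D h.symm⟩

noncomputable def repc (j : Fin l) : Fin l :=
  (univ.filter fun j' => (columnGraph D).Reachable j j').min'
    ⟨j, mem_filter.mpr ⟨mem_univ j, SimpleGraph.Reachable.refl j⟩⟩

lemma repc_reach (j : Fin l) : (columnGraph D).Reachable j (repc D j) := by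
  have := Finset.min'_mem (univ.filter fun j' => (columnGraph D).Reachable j j')
    ⟨j, mem_filter.mpr ⟨mem_univ j, SimpleGraph.Reachable.refl j⟩⟩
  exact (mem_filter.mp this).2

lemma repc_congr {j j' : Fin l} (h : (columnGraph D).Reachable j j') :
    repc D j = repc D j' := by
  have hfil : (univ.filter fun x => (columnGraph D).Reachable j x) =
      (univ.filter fun x => (columnGraph D).Reachable j' x) := by
    apply Finset.filter_congr
    intro x _
    exact reach_iff D h x
  unfold repc
  congr 1

noncomputable def chooseEps (c : Fin l) : Fin l → ℝ :=
  if h : RegulableComp D c then h.2.choose else fun _ => 1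

lemma chooseEps_spec {c : Fin l} (hreg : RegulableComp D c) :
    (∀ j', chooseEps D c j' = 1 ∨ chooseEps D c j' = -1) ∧
    ∀ i : Fin k,
      (univ.filter fun j' => (columnGraph D).Reachable c j' ∧
        D i j' * chooseEps D c j' = 1).card ≤ 1 ∧
      (univ.filter fun j' => (columnGraph D).Reachable c j' ∧
        D i j' * chooseEps D c j' = -1).card ≤ 1 := by
  unfold chooseEps
  rw [dif_pos hreg]
  exact hreg.2.choose_spec

noncomputable def glob (j : Fin l) : ℝ := chooseEps D (repc D j) j

lemma glob_pm (j : Fin l) : glob D j = 1 ∨ glob D j = -1 := by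
  unfold glob chooseEps
  split
  · next h => exact h.2.choose_spec.1 j
  · exact Or.inl rfl

lemma glob_eq {j j' : Fin l} (h : (columnGraph D).Reachable j j') :
    glob D j' = chooseEps D (repc D j) j' := by
  unfold glob
  rw [← repc_congr D h]

lemma glob_card {j : Fin l} (hreg : RegulableComp D j) (i : Fin k) (s : ℝ) :
    (univ.filter fun j' => (columnGraph D).Reachable j j' ∧ D i j' * glob D j' = s).card ≤
      (univ.filter fun j' => (columnGraph D).Reachable (repc D j) j' ∧
        D i j' * chooseEps D (repc D j) j' = s).card := by
  apply Finset.card_le_card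
  intro m hm
  simp only [mem_filter, mem_univ, true_and] at hm ⊢
  refine ⟨(repc_reach D j).symm.trans hm.1, ?_⟩
  rw [← glob_eq D hm.1]
  exact hm.2

lemma glob_card_le {j : Fin l} (hreg : RegulableComp D j) (i : Fin k) :
    (univ.filter fun j' => (columnGraph D).Reachable j j' ∧
      D i j' * glob D j' = 1).card ≤ 1 ∧
    (univ.filter fun j' => (columnGraph D).Reachable j j' ∧
      D i j' * glob D j' = -1).card ≤ 1 := by
  have hregc : RegulableComp D (repc D j) := reg_congr D (repc_reach D j) hreg
  have spec := (chooseEps_spec D hregc).2 i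
  exact ⟨le_trans (glob_card D hreg i 1) spec.1, le_trans (glob_card D hreg i (-1)) spec.2⟩


def IsTop (j : Fin l) : Prop :=
  RegulableComp D j ∧ ∀ j', (columnGraph D).Reachable j j' → j' ≤ j

variable {U : Matrix (Fin l) (Fin l) ℝ}

lemma U_eq (hU : ∀ j j' : Fin l, U j j' =
      if j = j' ∨ (RegulableComp D j ∧ (columnGraph D).Reachable j j' ∧
          ∀ j'' : Fin l, (columnGraph D).Reachable j j'' → j'' ≤ j') then 1 else 0)
    (m j : Fin l) :
    U m j = if m = j ∨ ((columnGraph D).Reachable j m ∧ IsTop D j) then 1 else 0 := by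
  rw [hU m j]
  refine if_congr (or_congr_right ?_) rfl rfl
  constructor
  · rintro ⟨hreg, hr, hmax⟩
    exact ⟨hr.symm, reg_congr D hr hreg, fun j' hj' => hmax j' (hr.trans hj')⟩
  · rintro ⟨hr, hreg, hmax⟩
    exact ⟨reg_congr D hr hreg, hr.symm, fun j'' hj'' => hmax j'' (hr.trans hj'')⟩

lemma U_nontop (hU : ∀ j j' : Fin l, U j j' =
      if j = j' ∨ (RegulableComp D j ∧ (columnGraph D).Reachable j j' ∧
          ∀ j'' : Fin l, (columnGraph D).Reachable j j'' → j'' ≤ j') then 1 else 0)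
    {j : Fin l} (hnt : ¬ IsTop D j) (m : Fin l) :
    U m j = if m = j then 1 else 0 := by
  rw [U_eq D hU m j]
  refine if_congr ?_ rfl rfl
  constructor
  · rintro (h | ⟨_, ht⟩)
    · exact h
    · exact absurd ht hnt
  · exact Or.inl

lemma U_top (hU : ∀ j j' : Fin l, U j j' =
      if j = j' ∨ (RegulableComp D j ∧ (columnGraph D).Reachable j j' ∧
          ∀ j'' : Fin l, (columnGraph D).Reachable j j'' → j'' ≤ j') then 1 else 0)
    {j : Fin l} (ht : IsTop D j) (m : Fin l) :
    U m j = if (columnGraph D).Reachable j m then 1 else 0 := by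
  rw [U_eq D hU m j]
  refine if_congr ?_ rfl rfl
  constructor
  · rintro (rfl | ⟨hr, _⟩)
    · exact SimpleGraph.Reachable.refl m
    · exact hr
  · intro hr
    exact Or.inr ⟨hr, ht⟩

lemma R_nontop (hU : ∀ j j' : Fin l, U j j' =
      if j = j' ∨ (RegulableComp D j ∧ (columnGraph D).Reachable j j' ∧
          ∀ j'' : Fin l, (columnGraph D).Reachable j j'' → j'' ≤ j') then 1 else 0)
    {j : Fin l} (hnt : ¬ IsTop D j) (i : Fin k) :
    (D * (Matrix.diagonal (glob D) * U)) i j = D i j * glob D j := by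
  rw [Matrix.mul_apply]
  rw [Finset.sum_eq_single j]
  · rw [Matrix.diagonal_mul, U_nontop D hU hnt j, if_pos rfl, mul_one]
  · intro m _ hm
    rw [Matrix.diagonal_mul, U_nontop D hU hnt m, if_neg hm, mul_zero, mul_zero]
  · intro h
    exact absurd (mem_univ j) h

lemma R_top (hD : NonBranching D)
    (hU : ∀ j j' : Fin l, U j j' =
      if j = j' ∨ (RegulableComp D j ∧ (columnGraph D).Reachable j j' ∧
          ∀ j'' : Fin l, (columnGraph D).Reachable j j'' → j'' ≤ j') then 1 else 0)
    {j : Fin l} (ht : IsTop D j) (i : Fin k) :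
    (D * (Matrix.diagonal (glob D) * U)) i j = 0 := by
  rw [Matrix.mul_apply]
  have hterm : ∀ m, D i m * (Matrix.diagonal (glob D) * U) m j =
      if (columnGraph D).Reachable j m then D i m * glob D m else 0 := by
    intro m
    rw [Matrix.diagonal_mul, U_top D hU ht m]
    split
    · rw [mul_one]
    · rw [mul_zero, mul_zero]
  rw [Finset.sum_congr rfl (fun m _ => hterm m), ← Finset.sum_filter]
  have hsum : ∑ m ∈ univ.filter (fun m => (columnGraph D).Reachable j m), D i m * glob D m
      = ∑ m ∈ univ.filter (fun m => (columnGraph D).Reachable j m ∧ D i m ≠ 0),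
          D i m * glob D m := by
    refine (Finset.sum_subset ?_ ?_).symm
    · intro m hm
      rw [mem_filter] at hm ⊢
      exact ⟨hm.1, hm.2.1⟩
    · intro m hm₁ hm₂
      rw [mem_filter] at hm₁ hm₂
      have : D i m = 0 := not_not.mp (fun hne => hm₂ ⟨hm₁.1, hm₁.2, hne⟩)
      rw [this, zero_mul]
  rw [hsum]
  have hle2 : (univ.filter fun m =>
      (columnGraph D).Reachable j m ∧ D i m ≠ 0).card ≤ 2 := by
    refine le_trans (Finset.card_le_card ?_) (hD.2 i)
    intro m hm
    rw [mem_filter] at hm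
    exact mem_filter.mpr ⟨mem_univ m, hm.2.2⟩
  have hne1 : (univ.filter fun m =>
      (columnGraph D).Reachable j m ∧ D i m ≠ 0).card ≠ 1 := ht.1.1 i
  have h02 : (univ.filter fun m => (columnGraph D).Reachable j m ∧ D i m ≠ 0).card = 0 ∨
      (univ.filter fun m => (columnGraph D).Reachable j m ∧ D i m ≠ 0).card = 2 := by omega
  rcases h02 with h0 | h2
  · rw [Finset.card_eq_zero.mp h0, Finset.sum_empty]
  · obtain ⟨m₁, m₂, hne, hFe⟩ := Finset.card_eq_two.mp h2
    have hm₁ : m₁ ∈ univ.filter fun m => (columnGraph D).Reachable j m ∧ D i m ≠ 0 := by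
      rw [hFe]; exact mem_insert_self _ _
    have hm₂ : m₂ ∈ univ.filter fun m => (columnGraph D).Reachable j m ∧ D i m ≠ 0 := by
      rw [hFe]; exact mem_insert_of_mem (mem_singleton_self _)
    rw [mem_filter] at hm₁ hm₂
    rw [hFe, Finset.sum_pair hne]
    have hv : ∀ m, (columnGraph D).Reachable j m → D i m ≠ 0 →
        D i m * glob D m = 1 ∨ D i m * glob D m = -1 := by
      intro m _ hdm
      rcases hD.1 i m with h | h | h
      · rcases glob_pm D m with hg | hg <;> rw [h, hg] <;> norm_num
      · exact absurd h hdm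
      · rcases glob_pm D m with hg | hg <;> rw [h, hg] <;> norm_num
    have hnotboth : ∀ s : ℝ, D i m₁ * glob D m₁ = s → D i m₂ * glob D m₂ = s →
        ¬ ((univ.filter fun j' => (columnGraph D).Reachable j j' ∧
          D i j' * glob D j' = s).card ≤ 1) := by
      intro s hs₁ hs₂ hcard
      have hsub : ({m₁, m₂} : Finset (Fin l)) ⊆
          univ.filter fun j' => (columnGraph D).Reachable j j' ∧ D i j' * glob D j' = s := by
        intro m hm
        simp only [mem_insert, mem_singleton] at hm
        rcases hm with rfl | rfl
        · exact mem_filter.mpr ⟨mem_univ _, hm₁.2.1, hs₁⟩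
        · exact mem_filter.mpr ⟨mem_univ _, hm₂.2.1, hs₂⟩
      have : ({m₁, m₂} : Finset (Fin l)).card ≤ 1 := le_trans (Finset.card_le_card hsub) hcard
      rw [Finset.card_insert_of_notMem (by simpa using hne), Finset.card_singleton] at this
      omega
    rcases hv m₁ hm₁.2.1 hm₁.2.2 with h1 | h1 <;> rcases hv m₂ hm₂.2.1 hm₂.2.2 with h2 | h2
    · exact absurd (glob_card_le D ht.1 i).1 (hnotboth 1 h1 h2)
    · rw [h1, h2]; ring
    · rw [h1, h2]; ring
    · exact absurd (glob_card_le D ht.1 i).2 (hnotboth (-1) h1 h2)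

lemma col_R_iff (hD : NonBranching D) (hcols : ∀ j, col D j ≠ 0)
    (hU : ∀ j j' : Fin l, U j j' =
      if j = j' ∨ (RegulableComp D j ∧ (columnGraph D).Reachable j j' ∧
          ∀ j'' : Fin l, (columnGraph D).Reachable j j'' → j'' ≤ j') then 1 else 0)
    (j : Fin l) :
    col (D * (Matrix.diagonal (glob D) * U)) j = 0 ↔ IsTop D j := by
  constructor
  · intro hz
    by_contra hnt
    apply hcols j
    funext i
    have := congrFun hz i
    rw [col] at this
    rw [R_nontop D hU hnt i] at this
    rcases mul_eq_zero.mp this with h | h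
    · exact h
    · rcases glob_pm D j with hg | hg <;> rw [hg] at h <;> norm_num at h
  · intro ht
    funext i
    exact R_top D hD hU ht i


lemma glob_sq (m : Fin l) : glob D m * glob D m = 1 := by
  rcases glob_pm D m with h | h <;> rw [h] <;> norm_num

lemma linind (hD : NonBranching D) (hcols : ∀ j, col D j ≠ 0)
    (hU : ∀ j j' : Fin l, U j j' =
      if j = j' ∨ (RegulableComp D j ∧ (columnGraph D).Reachable j j' ∧
          ∀ j'' : Fin l, (columnGraph D).Reachable j j'' → j'' ≤ j') then 1 else 0)
    {R : Matrix (Fin k) (Fin l) ℝ} (hR : R = D * (Matrix.diagonal (glob D) * U)) :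
    LinearIndependent ℝ fun j : {j : Fin l // col R j ≠ 0} => col R j.1 := by
  rw [Fintype.linearIndependent_iff]
  intro g hg
  have hcoliff : ∀ m : Fin l, col R m = 0 ↔ IsTop D m := by
    intro m
    rw [hR]
    exact col_R_iff D hD hcols hU m
  set b : Fin l → ℝ := fun m => if h : col R m ≠ 0 then g ⟨m, h⟩ else 0 with hb
  have hsum : ∀ i : Fin k, ∑ m : Fin l, D i m * (b m * glob D m) = 0 := by
    intro i
    have hgi := congrFun hg i
    simp only [Finset.sum_apply, Pi.smul_apply, Pi.zero_apply, smul_eq_mul, col] at hgi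
    have e0 : ∀ x : {j : Fin l // col R j ≠ 0}, g x * R i x.1 = b x.1 * R i x.1 := by
      intro x
      rw [hb]
      simp only []
      rw [dif_pos x.2]
    have e1 : ∑ x : {j : Fin l // col R j ≠ 0}, b x.1 * R i x.1
        = ∑ m ∈ univ.filter (fun m => col R m ≠ 0), b m * R i m := by
      exact (Finset.sum_subtype (univ.filter fun m => col R m ≠ 0)
        (by intro x; simp) (fun m => b m * R i m)).symm
    have e2 : ∑ m ∈ univ.filter (fun m => col R m ≠ 0), b m * R i m
        = ∑ m : Fin l, b m * R i m := by
      refine Finset.sum_subset (filter_subset _ _) ?_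
      intro m _ hm
      have : ¬ col R m ≠ 0 := fun h => hm (mem_filter.mpr ⟨mem_univ m, h⟩)
      rw [hb]
      simp only []
      rw [dif_neg this, zero_mul]
    have e3 : ∑ m : Fin l, b m * R i m = 0 := by
      rw [← e2, ← e1, ← Finset.sum_congr rfl (fun x _ => e0 x)]
      exact hgi
    rw [← e3]
    apply Finset.sum_congr rfl
    intro m _
    by_cases h : col R m ≠ 0
    · have hnt : ¬ IsTop D m := fun ht => h ((hcoliff m).mpr ht)
      have : R i m = D i m * glob D m := by rw [hR]; exact R_nontop D hU hnt i
      rw [this]; ring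
    · have hbz : b m = 0 := by rw [hb]; simp only []; rw [dif_neg h]
      rw [hbz]; ring
  have key : ∀ m, b m * glob D m = 0 := by
    by_contra hcon
    push_neg at hcon
    obtain ⟨j₀, hj₀⟩ := hcon
    have hreg : RegulableComp D j₀ := main_reg D hD hsum hj₀
    have hne : ((univ.filter fun j' => (columnGraph D).Reachable j₀ j')).Nonempty :=
      ⟨j₀, mem_filter.mpr ⟨mem_univ _, SimpleGraph.Reachable.refl _⟩⟩
    set t := (univ.filter fun j' => (columnGraph D).Reachable j₀ j').max' hne with hT
    have hreach : (columnGraph D).Reachable j₀ t :=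
      (mem_filter.mp (Finset.max'_mem _ hne)).2
    have htop : IsTop D t := by
      refine ⟨reg_congr D hreach hreg, fun j' hj' => ?_⟩
      exact Finset.le_max' _ j' (mem_filter.mpr ⟨mem_univ _, hreach.trans hj'⟩)
    have hcolz : col R t = 0 := (hcoliff t).mpr htop
    have hbz : b t = 0 := by
      rw [hb]; simp only []; rw [dif_neg (fun h => h hcolz)]
    have := reach_ne D hD hsum hreach hj₀
    rw [hbz, zero_mul] at this
    exact this rfl
  intro x
  have h1 : b x.1 = 0 := by
    have := key x.1
    have h2 : b x.1 * glob D x.1 * glob D x.1 = 0 := by rw [this, zero_mul]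
    rwa [mul_assoc, glob_sq D, mul_one] at h2
  rw [hb] at h1
  simp only [] at h1
  rwa [dif_pos x.2] at h1


lemma V_ne_nontop (hU : ∀ j j' : Fin l, U j j' =
      if j = j' ∨ (RegulableComp D j ∧ (columnGraph D).Reachable j j' ∧
          ∀ j'' : Fin l, (columnGraph D).Reachable j j'' → j'' ≤ j') then 1 else 0)
    {j : Fin l} (hnt : ¬ IsTop D j) :
    (univ.filter fun m => (Matrix.diagonal (glob D) * U) m j ≠ 0) = {j} := by
  ext m
  simp only [mem_filter, mem_univ, true_and, mem_singleton]
  rw [Matrix.diagonal_mul, U_nontop D hU hnt m]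
  constructor
  · intro h
    by_contra hm
    rw [if_neg hm, mul_zero] at h
    exact h rfl
  · rintro rfl
    rw [if_pos rfl, mul_one]
    rcases glob_pm D m with h | h <;> rw [h] <;> norm_num

lemma V_ne_top (hU : ∀ j j' : Fin l, U j j' =
      if j = j' ∨ (RegulableComp D j ∧ (columnGraph D).Reachable j j' ∧
          ∀ j'' : Fin l, (columnGraph D).Reachable j j'' → j'' ≤ j') then 1 else 0)
    {j : Fin l} (ht : IsTop D j) :
    (univ.filter fun m => (Matrix.diagonal (glob D) * U) m j ≠ 0) =
      univ.filter fun m => (columnGraph D).Reachable j m := by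
  ext m
  simp only [mem_filter, mem_univ, true_and]
  rw [Matrix.diagonal_mul, U_top D hU ht m]
  constructor
  · intro h
    by_contra hm
    rw [if_neg hm, mul_zero] at h
    exact h rfl
  · intro hm
    rw [if_pos hm, mul_one]
    rcases glob_pm D m with h | h <;> rw [h] <;> norm_num

lemma top_card (hcols : ∀ j, col D j ≠ 0) {j : Fin l} (ht : IsTop D j) :
    1 < (univ.filter fun m => (columnGraph D).Reachable j m).card := by
  have hex : ∃ i : Fin k, D i j ≠ 0 := by
    by_contra h
    push_neg at h
    exact hcols j (funext fun i => h i)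
  obtain ⟨i, hi⟩ := hex
  have hjmem : j ∈ univ.filter fun m => (columnGraph D).Reachable j m ∧ D i m ≠ 0 :=
    mem_filter.mpr ⟨mem_univ _, SimpleGraph.Reachable.refl _, hi⟩
  have hpos : 0 < (univ.filter fun m =>
      (columnGraph D).Reachable j m ∧ D i m ≠ 0).card := Finset.card_pos.mpr ⟨j, hjmem⟩
  have hne1 := ht.1.1 i
  have h2 : 1 < (univ.filter fun m =>
      (columnGraph D).Reachable j m ∧ D i m ≠ 0).card := by omega
  obtain ⟨a, ha, c, hc, hac⟩ := Finset.one_lt_card.mp h2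
  rw [mem_filter] at ha hc
  exact Finset.one_lt_card.mpr
    ⟨a, mem_filter.mpr ⟨mem_univ _, ha.2.1⟩, c, mem_filter.mpr ⟨mem_univ _, hc.2.1⟩, hac⟩

lemma supp_iff (hcols : ∀ j, col D j ≠ 0)
    (hU : ∀ j j' : Fin l, U j j' =
      if j = j' ∨ (RegulableComp D j ∧ (columnGraph D).Reachable j j' ∧
          ∀ j'' : Fin l, (columnGraph D).Reachable j j'' → j'' ≤ j') then 1 else 0)
    (j : Fin l) :
    1 < suppCard (Matrix.diagonal (glob D) * U) j ↔ IsTop D j := by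
  unfold suppCard
  by_cases ht : IsTop D j
  · rw [V_ne_top D hU ht]
    exact ⟨fun _ => ht, fun _ => top_card D hcols ht⟩
  · rw [V_ne_nontop D hU ht, Finset.card_singleton]
    simp [ht]

end Stmt8Aux

open Stmt8Aux

/-- For a non-branching matrix `D` with no zero columns there is a diagonal
sign matrix `E` orienting each regulable component, such that with `U` the upper-triangular
matrix with `1`s on the diagonal and `U j m = 1` whenever `m` is the largest column of the
(regulable) component of `j`, the factorization `R = D * (E * U)` is a weak column reduction
of `D`; moreover the `j`-th column of `R` is zero iff `j` is the largest column index of a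
regulable component. -/
theorem stmt8 {k l : ℕ} (D : Matrix (Fin k) (Fin l) ℝ)
    (hD : NonBranching D) (hcols : ∀ j, col D j ≠ 0)
    (U : Matrix (Fin l) (Fin l) ℝ)
    (hU : ∀ j j' : Fin l, U j j' =
      if j = j' ∨ (RegulableComp D j ∧ (columnGraph D).Reachable j j' ∧
          ∀ j'' : Fin l, (columnGraph D).Reachable j j'' → j'' ≤ j') then 1 else 0) :
    ∃ ε : Fin l → ℝ, (∀ j, ε j = 1 ∨ ε j = -1) ∧
      (∀ j : Fin l, RegulableComp D j → ∀ i : Fin k,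
        (Finset.univ.filter fun j' => (columnGraph D).Reachable j j' ∧
          (D * Matrix.diagonal ε) i j' = 1).card ≤ 1 ∧
        (Finset.univ.filter fun j' => (columnGraph D).Reachable j j' ∧
          (D * Matrix.diagonal ε) i j' = -1).card ≤ 1) ∧
      WeakColumnReduction D (D * (Matrix.diagonal ε * U)) (Matrix.diagonal ε * U) ∧
      (∀ j : Fin l, col (D * (Matrix.diagonal ε * U)) j = 0 ↔
        (RegulableComp D j ∧ ∀ j' : Fin l, (columnGraph D).Reachable j j' → j' ≤ j)) := by
  refine ⟨glob D, glob_pm D, ?_, ?_, ?_⟩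
  · intro j hreg i
    have hfe : ∀ s : ℝ, (Finset.univ.filter fun j' => (columnGraph D).Reachable j j' ∧
        (D * Matrix.diagonal (glob D)) i j' = s) =
        (Finset.univ.filter fun j' => (columnGraph D).Reachable j j' ∧
          D i j' * glob D j' = s) := by
      intro s
      ext m
      simp only [Finset.mem_filter, Finset.mem_univ, true_and, Matrix.mul_diagonal]
    rw [hfe 1, hfe (-1)]
    exact glob_card_le D hreg i
  · refine ⟨rfl, ?_, ?_, ?_, linind D hD hcols hU rfl, ?_, ?_⟩
    · -- upper triangular
      intro i j hji
      rw [Matrix.diagonal_mul, U_eq D hU i j, if_neg, mul_zero]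
      rintro (rfl | ⟨hr, ht⟩)
      · exact lt_irrefl _ hji
      · exact absurd hji (not_lt.mpr (ht.2 i hr))
    · -- entries in {-1,0,1}
      intro i j
      rw [Matrix.diagonal_mul, U_eq D hU i j]
      split
      · rw [mul_one]
        rcases glob_pm D i with h | h <;> rw [h]
        · right; right; rfl
        · left; rfl
      · rw [mul_zero]; right; left; rfl
    · -- diagonal entries
      intro i
      rw [Matrix.diagonal_mul, U_eq D hU i i, if_pos (Or.inl rfl), mul_one]
      rcases glob_pm D i with h | h <;> rw [h]
      · right; rfl
      · left; rfl
    · -- disjoint supports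
      intro j₁ j₂ hne h1 h2
      have ht1 : IsTop D j₁ := (supp_iff D hcols hU j₁).mp h1
      have ht2 : IsTop D j₂ := (supp_iff D hcols hU j₂).mp h2
      rw [Finset.disjoint_left]
      intro m hm1 hm2
      rw [V_ne_top D hU ht1] at hm1
      rw [V_ne_top D hU ht2] at hm2
      have hr1 : (columnGraph D).Reachable j₁ m := (Finset.mem_filter.mp hm1).2
      have hr2 : (columnGraph D).Reachable j₂ m := (Finset.mem_filter.mp hm2).2
      have h12 : (columnGraph D).Reachable j₁ j₂ := hr1.trans hr2.symm
      exact hne (le_antisymm (ht2.2 j₁ h12.symm) (ht1.2 j₂ h12))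
    · -- supp iff col zero
      intro j
      rw [supp_iff D hcols hU j]
      exact (col_R_iff D hD hcols hU j).symm
  · intro j
    exact col_R_iff D hD hcols hU j
end

section
/- Let D ∈ M_{k×l}(ℝ) be a non-branching matrix with no zero columns. Then rank(D) = l − r, where r is the number of connected components C of the column graph of D for which the submatrix of D consisting of the columns indexed by C has no row with exactly one non-zero entry and is orientable. -/
open scoped Classical

section Helpers

variable {k l : ℕ} {D : Matrix (Fin k) (Fin l) ℝ}

lemma entry_cases (hD : NonBranching D) {i : Fin k} {j : Fin l} (h : D i j ≠ 0) :
    D i j = 1 ∨ D i j = -1 := by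
  rcases hD.1 i j with h1 | h1 | h1 <;> tauto

lemma same_row_reachable {i : Fin k} {a b : Fin l} (ha : D i a ≠ 0) (hb : D i b ≠ 0) :
    (columnGraph D).Reachable a b := by
  by_cases hab : a = b
  · subst hab; exact SimpleGraph.Reachable.refl a
  · exact SimpleGraph.Adj.reachable ⟨hab, i, ha, hb⟩

lemma row_only_two (hD : NonBranching D) {i : Fin k} {a b : Fin l} (ha : D i a ≠ 0)
    (hb : D i b ≠ 0) (hab : a ≠ b) {c : Fin l} (hc : D i c ≠ 0) : c = a ∨ c = b := by
  by_contra hcon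
  push_neg at hcon
  have hsub : ({a, b, c} : Finset (Fin l)) ⊆ Finset.univ.filter fun j => D i j ≠ 0 := by
    intro x hx
    simp only [Finset.mem_insert, Finset.mem_singleton] at hx
    simp only [Finset.mem_filter, Finset.mem_univ, true_and]
    rcases hx with rfl | rfl | rfl <;> assumption
  have hcard : ({a, b, c} : Finset (Fin l)).card = 3 := by
    rw [Finset.card_insert_of_notMem, Finset.card_insert_of_notMem, Finset.card_singleton]
    · simpa using (hcon.2).symm
    · simp only [Finset.mem_insert, Finset.mem_singleton]
      push_neg
      exact ⟨hab, fun h => hcon.1 h.symm⟩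
  have := (Finset.card_le_card hsub).trans (hD.2 i)
  omega

lemma ker_row {x : Fin l → ℝ} (hx : D.mulVec x = 0) (i : Fin k) :
    ∑ j, D i j * x j = 0 := by
  have := congrFun hx i
  simpa [Matrix.mulVec, dotProduct] using this

lemma ker_row_single {x : Fin l → ℝ} (hx : D.mulVec x = 0) {i : Fin k} {a : Fin l}
    (ha : D i a ≠ 0) (honly : ∀ c, D i c ≠ 0 → c = a) : x a = 0 := by
  have h := ker_row hx i
  have hsum : ∑ j, D i j * x j = D i a * x a := by
    apply Finset.sum_eq_single a
    · intro c _ hc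
      by_cases h0 : D i c = 0
      · rw [h0, zero_mul]
      · exact absurd (honly c h0) hc
    · simp
  rw [hsum] at h
  exact (mul_eq_zero.mp h).resolve_left ha

lemma ker_row_pair {x : Fin l → ℝ} (hx : D.mulVec x = 0) {i : Fin k} {a b : Fin l}
    (hab : a ≠ b) (honly : ∀ c, D i c ≠ 0 → c = a ∨ c = b) :
    D i a * x a + D i b * x b = 0 := by
  have h := ker_row hx i
  have hsum : ∑ j, D i j * x j = ∑ j ∈ ({a, b} : Finset (Fin l)), D i j * x j := by
    refine (Finset.sum_subset (Finset.subset_univ _) ?_).symm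
    intro c _ hc
    simp only [Finset.mem_insert, Finset.mem_singleton] at hc
    push_neg at hc
    by_cases h0 : D i c = 0
    · rw [h0, zero_mul]
    · rcases honly c h0 with rfl | rfl
      · exact absurd rfl hc.1
      · exact absurd rfl hc.2
  rw [hsum, Finset.sum_pair hab] at h
  exact h

lemma reach_pm (hD : NonBranching D) {x : Fin l → ℝ} (hx : D.mulVec x = 0) {a b : Fin l}
    (h : (columnGraph D).Reachable a b) : x b = x a ∨ x b = -x a := by
  obtain ⟨w⟩ := h
  induction w with
  | nil => left; rfl
  | @cons u v w hadj p ih =>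
    obtain ⟨huv, i, hu, hv⟩ := hadj
    have hpair := ker_row_pair hx huv (fun c hc => row_only_two hD hu hv huv hc)
    have h1 := entry_cases hD hu
    have h2 := entry_cases hD hv
    have hstep : x v = x u ∨ x v = -x u := by
      rcases h1 with e1 | e1 <;> rcases h2 with e2 | e2 <;>
        rw [e1, e2] at hpair <;> [right; left; left; right] <;> linarith
    rcases ih with h3 | h3 <;> rcases hstep with h4 | h4 <;>
      rw [h3, h4] <;> simp [neg_neg] <;> tauto
section
variable {k l : ℕ} {D : Matrix (Fin k) (Fin l) ℝ}


lemma exists_max_rep (G : SimpleGraph (Fin l)) (j0 : Fin l) :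
    ∃ jm, G.Reachable j0 jm ∧ ∀ j', G.Reachable jm j' → j' ≤ jm := by
  classical
  have hne : (Finset.univ.filter fun j => G.Reachable j0 j).Nonempty :=
    ⟨j0, by simp [SimpleGraph.Reachable.refl]⟩
  set s := Finset.univ.filter fun j => G.Reachable j0 j with hs
  refine ⟨s.max' hne, ?_, ?_⟩
  · have := s.max'_mem hne
    exact (Finset.mem_filter.mp this).2
  · intro j' hj'
    have hmem : s.max' hne ∈ s := s.max'_mem hne
    exact s.le_max' _ (Finset.mem_filter.mpr
      ⟨Finset.mem_univ _, ((Finset.mem_filter.mp hmem).2).trans hj'⟩)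

lemma max_unique {G : SimpleGraph (Fin l)} {a b : Fin l}
    (ha : ∀ j', G.Reachable a j' → j' ≤ a) (hb : ∀ j', G.Reachable b j' → j' ≤ b)
    (hab : G.Reachable a b) : a = b :=
  le_antisymm (hb a hab.symm) (ha b hab)
end

section
variable {k l : ℕ} {D : Matrix (Fin k) (Fin l) ℝ}

lemma regulable_of_reachable {a b : Fin l} (h : (columnGraph D).Reachable a b)
    (hr : RegulableComp D b) : RegulableComp D a := by
  have heq : ∀ j', (columnGraph D).Reachable a j' = (columnGraph D).Reachable b j' :=
    fun j' => propext ⟨fun h' => h.symm.trans h', fun h' => h.trans h'⟩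
  unfold RegulableComp at hr ⊢
  simp only [heq]
  exact hr

lemma regulable_of_ker (hD : NonBranching D) {x : Fin l → ℝ} (hx : D.mulVec x = 0)
    {j0 : Fin l} (h0 : x j0 ≠ 0) : RegulableComp D j0 := by
  constructor
  · intro i hcard
    obtain ⟨a, ha⟩ := Finset.card_eq_one.mp hcard
    have hmem : a ∈ Finset.univ.filter fun j' =>
        (columnGraph D).Reachable j0 j' ∧ D i j' ≠ 0 := by rw [ha]; simp
    rw [Finset.mem_filter] at hmem
    obtain ⟨-, hreach, hDa⟩ := hmem
    have honly : ∀ c, D i c ≠ 0 → c = a := by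
      intro c hc
      have : c ∈ Finset.univ.filter fun j' =>
          (columnGraph D).Reachable j0 j' ∧ D i j' ≠ 0 := by
        rw [Finset.mem_filter]
        exact ⟨Finset.mem_univ _, hreach.trans (same_row_reachable hDa hc), hc⟩
      rw [ha, Finset.mem_singleton] at this
      exact this
    have hxa : x a = 0 := ker_row_single hx hDa honly
    rcases reach_pm hD hx hreach with h | h <;> rw [hxa] at h <;>
      [exact h0 h.symm; exact h0 (by linarith)]
  · refine ⟨fun j' => if (columnGraph D).Reachable j0 j' then x j' / x j0 else 1, ?_, ?_⟩
    · intro j'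
      dsimp only
      by_cases hr : (columnGraph D).Reachable j0 j'
      · rw [if_pos hr]
        rcases reach_pm hD hx hr with h | h <;> rw [h]
        · left; exact div_self h0
        · right; rw [neg_div]; rw [div_self h0]
      · rw [if_neg hr]; left; rfl
    · intro i
      constructor
      · rw [Finset.card_le_one]
        intro a ha b hb
        rw [Finset.mem_filter] at ha hb
        obtain ⟨-, hra, hpa⟩ := ha
        obtain ⟨-, hrb, hpb⟩ := hb
        dsimp only at hpa hpb
        rw [if_pos hra] at hpa
        rw [if_pos hrb] at hpb
        by_contra hab
        have hDa : D i a ≠ 0 := fun h => by rw [h] at hpa; simp at hpa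
        have hDb : D i b ≠ 0 := fun h => by rw [h] at hpb; simp at hpb
        have hpair := ker_row_pair hx hab (fun c hc => row_only_two hD hDa hDb hab hc)
        have e1 : D i a * x a = x j0 := by field_simp at hpa; linarith
        have e2 : D i b * x b = x j0 := by field_simp at hpb; linarith
        apply h0; linarith
      · rw [Finset.card_le_one]
        intro a ha b hb
        rw [Finset.mem_filter] at ha hb
        obtain ⟨-, hra, hpa⟩ := ha
        obtain ⟨-, hrb, hpb⟩ := hb
        dsimp only at hpa hpb
        rw [if_pos hra] at hpa
        rw [if_pos hrb] at hpb
        by_contra hab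
        have hDa : D i a ≠ 0 := fun h => by rw [h] at hpa; simp at hpa
        have hDb : D i b ≠ 0 := fun h => by rw [h] at hpb; simp at hpb
        have hpair := ker_row_pair hx hab (fun c hc => row_only_two hD hDa hDb hab hc)
        have e1 : D i a * x a = -x j0 := by field_simp at hpa; linarith
        have e2 : D i b * x b = -x j0 := by field_simp at hpb; linarith
        apply h0; linarith
end

section
variable {k l : ℕ} {D : Matrix (Fin k) (Fin l) ℝ}

lemma sgn_mul {p q : ℝ} (hp : p = 1 ∨ p = -1) (hq : q = 1 ∨ q = -1) :
    p * q = 1 ∨ p * q = -1 := by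
  rcases hp with rfl | rfl <;> rcases hq with rfl | rfl <;> norm_num

lemma ker_of_regulable (hD : NonBranching D) {j : Fin l} {e : Fin l → ℝ}
    (hsign : ∀ j', e j' = 1 ∨ e j' = -1)
    (hc1 : ∀ i : Fin k, (Finset.univ.filter fun j' =>
      (columnGraph D).Reachable j j' ∧ D i j' ≠ 0).card ≠ 1)
    (hc2 : ∀ i : Fin k,
      (Finset.univ.filter fun j' => (columnGraph D).Reachable j j' ∧
        D i j' * e j' = 1).card ≤ 1 ∧
      (Finset.univ.filter fun j' => (columnGraph D).Reachable j j' ∧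
        D i j' * e j' = -1).card ≤ 1) :
    D.mulVec (fun j' => if (columnGraph D).Reachable j j' then e j' else 0) = 0 := by
  funext i
  show ∑ j', D i j' * (if (columnGraph D).Reachable j j' then e j' else 0) = 0
  set A := Finset.univ.filter fun j' => (columnGraph D).Reachable j j' ∧ D i j' ≠ 0 with hA
  have hsum : ∑ j', D i j' * (if (columnGraph D).Reachable j j' then e j' else 0) =
      ∑ j' ∈ A, D i j' * (if (columnGraph D).Reachable j j' then e j' else 0) := by
    refine (Finset.sum_subset (Finset.subset_univ _) ?_).symm
    intro c _ hc
    rw [hA, Finset.mem_filter] at hc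
    push_neg at hc
    by_cases hre : (columnGraph D).Reachable j c
    · have : D i c = 0 := hc (Finset.mem_univ _) hre
      rw [this, zero_mul]
    · rw [if_neg hre, mul_zero]
  rw [hsum]
  have hAle : A.card ≤ 2 := by
    refine (Finset.card_le_card ?_).trans (hD.2 i)
    intro c hc
    rw [hA, Finset.mem_filter] at hc
    exact Finset.mem_filter.mpr ⟨Finset.mem_univ _, hc.2.2⟩
  have hAcases : A.card = 0 ∨ A.card = 2 := by
    have := hc1 i
    rw [← hA] at this
    omega
  rcases hAcases with h0 | h2
  · rw [Finset.card_eq_zero.mp h0, Finset.sum_empty]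
  · obtain ⟨a, b, hab, hAab⟩ := Finset.card_eq_two.mp h2
    have hamem : a ∈ A := by rw [hAab]; simp
    have hbmem : b ∈ A := by rw [hAab]; simp
    rw [hA, Finset.mem_filter] at hamem hbmem
    obtain ⟨-, hra, hDa⟩ := hamem
    obtain ⟨-, hrb, hDb⟩ := hbmem
    rw [hAab, Finset.sum_pair hab, if_pos hra, if_pos hrb]
    have hpa := sgn_mul (entry_cases hD hDa) (hsign a)
    have hpb := sgn_mul (entry_cases hD hDb) (hsign b)
    have hne1 : ¬(D i a * e a = 1 ∧ D i b * e b = 1) := by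
      rintro ⟨h1, h1'⟩
      have := (hc2 i).1
      rw [Finset.card_le_one] at this
      exact hab (this a (by simp [hra, h1]) b (by simp [hrb, h1']))
    have hne2 : ¬(D i a * e a = -1 ∧ D i b * e b = -1) := by
      rintro ⟨h1, h1'⟩
      have := (hc2 i).2
      rw [Finset.card_le_one] at this
      exact hab (this a (by simp [hra, h1]) b (by simp [hrb, h1']))
    rcases hpa with h | h <;> rcases hpb with h' | h'
    · exact absurd ⟨h, h'⟩ hne1
    · rw [h, h']; ring
    · rw [h, h']; ring
    · exact absurd ⟨h, h'⟩ hne2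
end

end Helpers

/-- For a non-branching matrix `D` with no zero columns,
`rank D = l - r` where `r` is the number of regulable connected components of the column
graph of `D` (each component is counted via its largest column index). -/
theorem stmt9 {k l : ℕ} (D : Matrix (Fin k) (Fin l) ℝ)
    (hD : NonBranching D) (hcols : ∀ j, col D j ≠ 0) :
    D.rank = l - (Finset.univ.filter fun j : Fin l =>
      RegulableComp D j ∧ ∀ j' : Fin l, (columnGraph D).Reachable j j' → j' ≤ j).card := by
  classical
  set S : Finset (Fin l) := Finset.univ.filter (fun j : Fin l =>
      RegulableComp D j ∧ ∀ j' : Fin l, (columnGraph D).Reachable j j' → j' ≤ j) with hSdef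
  let φ : LinearMap.ker D.mulVecLin →ₗ[ℝ] (↥S → ℝ) :=
    { toFun := fun x j => x.1 j.1
      map_add' := fun x y => rfl
      map_smul' := fun c x => rfl }
  have hinj : Function.Injective φ := by
    intro x y hxy
    have hz : D.mulVec (x.1 - y.1) = 0 := by
      have h := map_sub D.mulVecLin x.1 y.1
      rw [LinearMap.mem_ker.mp x.2, LinearMap.mem_ker.mp y.2, sub_zero] at h
      rw [← Matrix.mulVecLin_apply]
      exact h
    have hz0 : x.1 - y.1 = 0 := by
      by_contra hne
      obtain ⟨j0, h0⟩ := Function.ne_iff.mp hne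
      have h0' : (x.1 - y.1) j0 ≠ 0 := by simpa using h0
      have hreg := regulable_of_ker hD hz h0'
      obtain ⟨jm, hjm1, hjm2⟩ := exists_max_rep (columnGraph D) j0
      have hregm := regulable_of_reachable hjm1.symm hreg
      have hmem : jm ∈ S := by
        rw [hSdef, Finset.mem_filter]
        exact ⟨Finset.mem_univ _, hregm, hjm2⟩
      have hxy' : x.1 jm = y.1 jm := congrFun hxy ⟨jm, hmem⟩
      have hzm : (x.1 - y.1) jm = 0 := by simp [Pi.sub_apply, hxy']
      rcases reach_pm hD hz hjm1 with h | h <;> rw [hzm] at h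
      · exact h0' h.symm
      · exact h0' (by linarith)
    exact Subtype.ext (sub_eq_zero.mp hz0)
  have hsurj : Function.Surjective φ := by
    intro t
    have hmem' : ∀ j : ↥S, RegulableComp D j.1 ∧
        ∀ j' : Fin l, (columnGraph D).Reachable j.1 j' → j' ≤ j.1 :=
      fun j => (Finset.mem_filter.mp j.2).2
    let e : ↥S → (Fin l → ℝ) := fun j => ((hmem' j).1.2).choose
    have hspec : ∀ j : ↥S, (∀ j', e j j' = 1 ∨ e j j' = -1) ∧
        ∀ i : Fin k,
          (Finset.univ.filter fun j' => (columnGraph D).Reachable j.1 j' ∧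
            D i j' * e j j' = 1).card ≤ 1 ∧
          (Finset.univ.filter fun j' => (columnGraph D).Reachable j.1 j' ∧
            D i j' * e j j' = -1).card ≤ 1 :=
      fun j => ((hmem' j).1.2).choose_spec
    let v : ↥S → (Fin l → ℝ) :=
      fun j j' => if (columnGraph D).Reachable j.1 j' then e j j' else 0
    have hv : ∀ j : ↥S, D.mulVec (v j) = 0 :=
      fun j => ker_of_regulable hD (hspec j).1 ((hmem' j).1.1) (hspec j).2
    set x : Fin l → ℝ := ∑ j ∈ S.attach, (t j * e j j.1) • v j with hxdef
    have hxker : x ∈ LinearMap.ker D.mulVecLin := by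
      refine Submodule.sum_mem _ (fun j _ => Submodule.smul_mem _ _ ?_)
      rw [LinearMap.mem_ker, Matrix.mulVecLin_apply]
      exact hv j
    refine ⟨⟨x, hxker⟩, ?_⟩
    funext j
    show x j.1 = t j
    rw [hxdef, Finset.sum_apply]
    rw [Finset.sum_eq_single j]
    · have hrefl : (columnGraph D).Reachable j.1 j.1 := SimpleGraph.Reachable.refl _
      have hval : v j j.1 = e j j.1 := if_pos hrefl
      rw [Pi.smul_apply, hval, smul_eq_mul]
      rcases (hspec j).1 j.1 with h | h <;> rw [h] <;> ring
    · intro b _ hbj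
      have hnr : ¬ (columnGraph D).Reachable b.1 j.1 := by
        intro hr
        exact hbj (Subtype.ext (max_unique (hmem' b).2 (hmem' j).2 hr))
      have : v b j.1 = 0 := if_neg hnr
      rw [Pi.smul_apply, this, smul_zero]
    · intro h
      exact absurd (Finset.mem_attach _ _) h
  have hfr : Module.finrank ℝ (LinearMap.ker D.mulVecLin) = S.card := by
    rw [(LinearEquiv.ofBijective φ ⟨hinj, hsurj⟩).finrank_eq, Module.finrank_pi,
      Fintype.card_coe]
  have hrn := LinearMap.finrank_range_add_finrank_ker D.mulVecLin
  rw [Module.finrank_fin_fun, hfr] at hrn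
  have hrank : D.rank = Module.finrank ℝ (LinearMap.range D.mulVecLin) := rfl
  omega
end

section
/- Let B ∈ M_{n×m}(ℝ) and let W ∈ M_{m×m}(ℝ) be a diagonal matrix with strictly positive diagonal entries w₁,…,w_m. Then every non-zero eigenvalue λ of the symmetric matrix B·W·Bᵀ satisfies λ ≥ min_{1≤j≤m} w_j · ( (Bᵀ·B)_{jj} − Σ_{i≠j} |(Bᵀ·B)_{ij}| ). (When the entries of B lie in {−1,0,1}, the quantity (Bᵀ·B)_{jj} equals the number of non-zero entries of the j-th column of B, and |(Bᵀ·B)_{ij}| is the absolute value of the standard inner product of the i-th and j-th columns of B, so this is the Cheeger-type lower bound min_j Â(P_j)/V(P_j) ≤ λ_min for the up persistent Laplacian of an unweighted q-non-branching pair.) -/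
/-- Geršgorin-type lower bound. Let `B ∈ M_{n×m}(ℝ)` and let `W` be an
`m×m` diagonal matrix with strictly positive diagonal entries `w₁, …, w_m`.  Then every
non-zero eigenvalue `λ` of `B * W * Bᵀ` satisfies
`λ ≥ min_j w_j * ((BᵀB)_{jj} - ∑_{i ≠ j} |(BᵀB)_{ij}|)`,
i.e. some `j` realizes `w_j * ((BᵀB)_{jj} - ∑_{i ≠ j} |(BᵀB)_{ij}|) ≤ λ`. -/
theorem stmt11 {n m : ℕ} (B : Matrix (Fin n) (Fin m) ℝ) (w : Fin m → ℝ)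
    (hw : ∀ j, 0 < w j) (W : Matrix (Fin m) (Fin m) ℝ) (hW : W = Matrix.diagonal w)
    (lam : ℝ) (hlam : lam ≠ 0)
    (heig : ∃ v : Fin n → ℝ, v ≠ 0 ∧ (B * W * B.transpose).mulVec v = lam • v) :
    ∃ j : Fin m,
      w j * ((B.transpose * B) j j -
        ∑ i ∈ Finset.univ.filter (fun i => i ≠ j), |(B.transpose * B) i j|) ≤ lam := by
  obtain ⟨v, hv, hev⟩ := heig
  set G := B.transpose * B with hG
  have hGsymm : ∀ i j, G i j = G j i := by
    intro i j
    simp only [hG, Matrix.mul_apply, Matrix.transpose_apply]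
    exact Finset.sum_congr rfl fun k _ => mul_comm _ _
  set u : Fin m → ℝ := (W * B.transpose).mulVec v with hu_def
  have hu : (W * G).mulVec u = lam • u := by
    rw [hu_def, Matrix.mulVec_mulVec]
    have hassoc : W * G * (W * B.transpose)
        = (W * B.transpose) * (B * W * B.transpose) := by
      simp only [hG, Matrix.mul_assoc]
    rw [hassoc, ← Matrix.mulVec_mulVec, hev, Matrix.mulVec_smul]
  have hu0 : u ≠ 0 := by
    intro h
    have hB : (B * W * B.transpose).mulVec v = B.mulVec u := by
      rw [hu_def, Matrix.mulVec_mulVec, Matrix.mul_assoc]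
    rw [h, Matrix.mulVec_zero] at hB
    rw [hB] at hev
    rcases (smul_eq_zero.mp hev.symm) with h1 | h2
    · exact hlam h1
    · exact hv h2
  obtain ⟨i0, hi0⟩ := Function.ne_iff.mp hu0
  obtain ⟨j, -, hj⟩ := Finset.exists_max_image Finset.univ (fun i => |u i|)
    ⟨i0, Finset.mem_univ i0⟩
  have hjpos : 0 < |u j| :=
    lt_of_lt_of_le (abs_pos.mpr hi0) (hj i0 (Finset.mem_univ i0))
  -- eigen equation at row j
  have heq : ∑ i, (W * G) j i * u i = lam * u j := by
    have := congrFun hu j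
    simpa [Matrix.mulVec, dotProduct] using this
  have hfilter : Finset.univ.filter (fun i => i ≠ j) = Finset.univ.erase j :=
    Finset.filter_ne' Finset.univ j
  have hsplit : (W * G) j j * u j
      + ∑ i ∈ Finset.univ.erase j, (W * G) j i * u i = lam * u j := by
    exact (Finset.add_sum_erase Finset.univ (fun i => (W * G) j i * u i)
      (Finset.mem_univ j)).trans heq
  set S : ℝ := ∑ i ∈ Finset.univ.erase j, |(W * G) j i| with hS
  have hkey : |lam - (W * G) j j| ≤ S := by
    have h1 : |lam - (W * G) j j| * |u j|
        = |∑ i ∈ Finset.univ.erase j, (W * G) j i * u i| := by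
      rw [← abs_mul]
      congr 1
      linarith [hsplit]
    have h2 : |∑ i ∈ Finset.univ.erase j, (W * G) j i * u i| ≤ S * |u j| := by
      refine (Finset.abs_sum_le_sum_abs _ _).trans ?_
      rw [hS, Finset.sum_mul]
      refine Finset.sum_le_sum fun i _ => ?_
      rw [abs_mul]
      exact mul_le_mul_of_nonneg_left (hj i (Finset.mem_univ i)) (abs_nonneg _)
    have := h1.trans_le h2
    exact le_of_mul_le_mul_right this hjpos
  have hlow : (W * G) j j - S ≤ lam := by
    have := neg_abs_le (lam - (W * G) j j)
    linarith [neg_le_neg hkey]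
  refine ⟨j, ?_⟩
  have hdiag : ∀ i, (W * G) j i = w j * G j i := by
    intro i
    rw [hW, Matrix.diagonal_mul]
  have hMjj : (W * G) j j = w j * G j j := hdiag j
  have hSval : S = w j * ∑ i ∈ Finset.univ.filter (fun i => i ≠ j), |G i j| := by
    rw [hS, hfilter, Finset.mul_sum]
    refine Finset.sum_congr rfl fun i _ => ?_
    rw [hdiag i, abs_mul, abs_of_pos (hw j), hGsymm i j]
  calc w j * (G j j - ∑ i ∈ Finset.univ.filter (fun i => i ≠ j), |G i j|)
      = (W * G) j j - S := by rw [hMjj, hSval]; ring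
    _ ≤ lam := hlow
end

section
/- Let B ∈ M_{n×m}(ℝ) be a non-zero matrix whose columns are linearly independent, and let W ∈ M_{m×m}(ℝ) be a diagonal matrix with strictly positive diagonal entries w₁,…,w_m. Then B·W·Bᵀ has exactly m non-zero eigenvalues counted with multiplicity, all of them positive, and its smallest non-zero eigenvalue λ_min satisfies λ_min ≤ min_{1≤j≤m} w_j · (Bᵀ·B)_{jj}. -/
lemma min_eig_le_diag {m : ℕ} {M : Matrix (Fin m) (Fin m) ℝ} (hMh : M.IsHermitian)
    (k : Fin m) (hk : ∀ k', hMh.eigenvalues k ≤ hMh.eigenvalues k') (j : Fin m) :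
    hMh.eigenvalues k ≤ M j j := by
  set U : Matrix (Fin m) (Fin m) ℝ := (hMh.eigenvectorUnitary : Matrix (Fin m) (Fin m) ℝ) with hU
  have hU1 : U * star U = 1 := Matrix.mem_unitaryGroup_iff.mp hMh.eigenvectorUnitary.2
  have h2 : ∑ l, U j l * U j l = 1 := by
    have := congrArg (fun X => X j j) hU1
    simpa [Matrix.mul_apply, Matrix.star_apply, Matrix.one_apply] using this
  have h1 : M j j = ∑ l, hMh.eigenvalues l * (U j l * U j l) := by
    conv_lhs => rw [hMh.spectral_theorem, Unitary.conjStarAlgAut_apply]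
    rw [Matrix.mul_apply]
    refine Finset.sum_congr rfl fun l _ => ?_
    rw [Matrix.mul_diagonal, Matrix.star_apply, star_trivial]
    show U j l * (hMh.eigenvalues l) * U j l = _
    ring
  calc hMh.eigenvalues k = hMh.eigenvalues k * ∑ l, U j l * U j l := by rw [h2, mul_one]
    _ = ∑ l, hMh.eigenvalues k * (U j l * U j l) := Finset.mul_sum _ _ _
    _ ≤ ∑ l, hMh.eigenvalues l * (U j l * U j l) :=
        Finset.sum_le_sum fun l _ => mul_le_mul_of_nonneg_right (hk l) (mul_self_nonneg _)
    _ = M j j := h1.symm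

/-- Let `B ∈ M_{n×m}(ℝ)` be a non-zero matrix with linearly independent
columns and let `W` be an `m×m` diagonal matrix with strictly positive diagonal entries
`w₁, …, w_m`.  Then (counting with multiplicity, via the eigenvalues of the symmetric matrix
`B * W * Bᵀ`) exactly `m` eigenvalues of `B * W * Bᵀ` are non-zero, all of them are
positive, and the smallest non-zero eigenvalue `λ_min` satisfies
`λ_min ≤ min_j w_j * (BᵀB)_{jj}`. -/
theorem stmt12 {n m : ℕ} (B : Matrix (Fin n) (Fin m) ℝ) (hB : B ≠ 0)
    (hind : LinearIndependent ℝ (fun j : Fin m => fun i : Fin n => B i j))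
    (w : Fin m → ℝ) (hw : ∀ j, 0 < w j)
    (W : Matrix (Fin m) (Fin m) ℝ) (hW : W = Matrix.diagonal w)
    (hA : (B * W * B.transpose).IsHermitian) :
    (Finset.univ.filter fun i : Fin n => hA.eigenvalues i ≠ 0).card = m ∧
    (∀ i : Fin n, hA.eigenvalues i ≠ 0 → 0 < hA.eigenvalues i) ∧
    (∀ i : Fin n, (hA.eigenvalues i ≠ 0 ∧
        ∀ i' : Fin n, hA.eigenvalues i' ≠ 0 → hA.eigenvalues i ≤ hA.eigenvalues i') →
      ∀ j : Fin m, hA.eigenvalues i ≤ w j * (B.transpose * B) j j) := by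
  classical
  have hw0 : ∀ j, (0:ℝ) ≤ w j := fun j => (hw j).le
  -- D = W^{1/2}, C = B * D
  let D : Matrix (Fin m) (Fin m) ℝ := Matrix.diagonal fun j => Real.sqrt (w j)
  let C : Matrix (Fin n) (Fin m) ℝ := B * D
  have hDT : D.transpose = D := Matrix.diagonal_transpose _
  have hDD : D * D = W := by
    rw [hW]
    show Matrix.diagonal _ * Matrix.diagonal _ = _
    rw [Matrix.diagonal_mul_diagonal]
    exact congrArg Matrix.diagonal (funext fun j => Real.mul_self_sqrt (hw0 j))
  have hCC : C * C.transpose = B * W * B.transpose := by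
    show B * D * (B * D).transpose = _
    rw [Matrix.transpose_mul, hDT, ← Matrix.mul_assoc, Matrix.mul_assoc B D D, hDD]
  have hDdet : IsUnit D.det := by
    have : (0:ℝ) < D.det := by
      rw [Matrix.det_diagonal]
      exact Finset.prod_pos fun j _ => Real.sqrt_pos.mpr (hw j)
    exact this.ne'.isUnit
  have hBrank : B.rank = m := by
    have h1 : (B.transpose).rank = Fintype.card (Fin m) := hind.rank_matrix
    rw [← Matrix.rank_transpose, h1, Fintype.card_fin]
  have hCrank : C.rank = m := by
    rw [Matrix.rank_mul_eq_left_of_isUnit_det D B hDdet, hBrank]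
  have hrankA : (B * W * B.transpose).rank = m := by
    rw [← hCC, Matrix.rank_self_mul_transpose, hCrank]
  -- positive semidefiniteness
  have hPSD : (B * W * B.transpose).PosSemidef := by
    rw [← hCC, ← Matrix.conjTranspose_eq_transpose_of_trivial]
    exact Matrix.posSemidef_self_mul_conjTranspose C
  -- part 1
  have part1 : (Finset.univ.filter fun i : Fin n => hA.eigenvalues i ≠ 0).card = m := by
    have hcard := hA.rank_eq_card_non_zero_eigs
    rw [hrankA, Fintype.card_subtype] at hcard
    exact hcard.symm
  -- part 2
  have part2 : ∀ i : Fin n, hA.eigenvalues i ≠ 0 → 0 < hA.eigenvalues i := fun i hi =>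
    lt_of_le_of_ne (hPSD.eigenvalues_nonneg i) (Ne.symm hi)
  refine ⟨part1, part2, ?_⟩
  -- part 3
  intro i hi j
  -- the m×m matrix M = Cᵀ C
  have hMpsd : (C.transpose * C).PosSemidef := by
    rw [← Matrix.conjTranspose_eq_transpose_of_trivial]
    exact Matrix.posSemidef_conjTranspose_mul_self C
  have hMh : (C.transpose * C).IsHermitian := hMpsd.1
  have hMrank : (C.transpose * C).rank = m := by
    rw [Matrix.rank_transpose_mul_self, hCrank]
  have hMeig : ∀ k, 0 < hMh.eigenvalues k := by
    have hcard := hMh.rank_eq_card_non_zero_eigs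
    rw [hMrank, Fintype.card_subtype] at hcard
    have huniv : (Finset.univ.filter fun k : Fin m => hMh.eigenvalues k ≠ 0) = Finset.univ :=
      Finset.eq_univ_of_card _ (by rw [← hcard, Fintype.card_fin])
    intro k
    have hk : hMh.eigenvalues k ≠ 0 :=
      (Finset.mem_filter.mp (Finset.eq_univ_iff_forall.mp huniv k)).2
    exact lt_of_le_of_ne (hMpsd.eigenvalues_nonneg k) (Ne.symm hk)
  -- pick the minimal eigenvalue of M
  obtain ⟨k, -, hkmin⟩ :=
    Finset.exists_min_image Finset.univ hMh.eigenvalues ⟨j, Finset.mem_univ j⟩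
  set μ : ℝ := hMh.eigenvalues k with hμ
  set u : Fin m → ℝ := ⇑(hMh.eigenvectorBasis k) with hu
  have hMu : (C.transpose * C).mulVec u = μ • u := hMh.mulVec_eigenvectorBasis k
  have hune : u ≠ 0 := by
    intro h
    apply hMh.eigenvectorBasis.orthonormal.ne_zero k
    ext x
    exact congrFun h x
  have hvne : C.mulVec u ≠ 0 := by
    intro h
    have h2 : (C.transpose * C).mulVec u = 0 := by
      rw [← Matrix.mulVec_mulVec, h, Matrix.mulVec_zero]
    rw [hMu] at h2
    rcases smul_eq_zero.mp h2 with h3 | h3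
    · exact (hMeig k).ne' h3
    · exact hune h3
  have key : (B * W * B.transpose).mulVec (C.mulVec u) = μ • (C.mulVec u) := by
    rw [← hCC, Matrix.mulVec_mulVec, Matrix.mul_assoc, ← Matrix.mulVec_mulVec, hMu,
      Matrix.mulVec_smul]
  -- μ is an eigenvalue of A
  have hspec : μ ∈ spectrum ℝ (B * W * B.transpose) := by
    rw [← AlgEquiv.spectrum_eq (Matrix.toLinAlgEquiv' :
      Matrix (Fin n) (Fin n) ℝ ≃ₐ[ℝ] _) (B * W * B.transpose)]
    rw [← Module.End.hasEigenvalue_iff_mem_spectrum]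
    apply Module.End.hasEigenvalue_of_hasEigenvector (x := C.mulVec u)
    refine ⟨?_, hvne⟩
    rw [Module.End.mem_eigenspace_iff]
    simpa using key
  rw [hA.spectrum_real_eq_range_eigenvalues] at hspec
  obtain ⟨i', hi'⟩ := hspec
  have h1 : hA.eigenvalues i ≤ μ := by
    rw [← hi']
    exact hi.2 i' (by rw [hi']; exact (hMeig k).ne')
  have h2 : μ ≤ (C.transpose * C) j j :=
    min_eig_le_diag hMh k (fun k' => hkmin k' (Finset.mem_univ k')) j
  have hdiag : (C.transpose * C) j j = w j * (B.transpose * B) j j := by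
    show ((B * D).transpose * (B * D)) j j = _
    rw [Matrix.transpose_mul, hDT, Matrix.mul_apply, Matrix.mul_apply, Finset.mul_sum]
    refine Finset.sum_congr rfl fun l _ => ?_
    rw [Matrix.diagonal_mul, Matrix.mul_diagonal]
    simp only [Matrix.transpose_apply]
    rw [show Real.sqrt (w j) * B l j * (B l j * Real.sqrt (w j))
        = (Real.sqrt (w j) * Real.sqrt (w j)) * (B l j * B l j) by ring,
      Real.mul_self_sqrt (hw0 j)]
  rw [← hdiag]
  exact h1.trans h2
end

section
/- Let B ∈ M_{n×m}(ℝ) be a non-zero matrix whose columns are linearly independent, and let W ∈ M_{m×m}(ℝ) be a diagonal matrix with strictly positive diagonal entries w₁,…,w_m. Let λ_min denote the smallest non-zero eigenvalue of the symmetric positive-semidefinite matrix B·W·Bᵀ. Then min_{1≤j≤m} w_j · ( (Bᵀ·B)_{jj} − Σ_{i≠j} |(Bᵀ·B)_{ij}| ) ≤ λ_min ≤ min_{1≤j≤m} w_j · (Bᵀ·B)_{jj}. (With B the matrix representation of the restricted boundary operator of an unweighted q-non-branching pair K ↪ L and W = Id⊕S⁻¹, this is the Cheeger-type inequality min_j Â(P_j)/V(P_j)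 ≤ λ_min^{K,L} ≤ min_j A(P_j)/V(P_j).) -/
/-- Cheeger-type inequality. Let `B ∈ M_{n×m}(ℝ)` be a non-zero matrix
with linearly independent columns and let `W` be an `m×m` diagonal matrix with strictly
positive diagonal entries `w₁, …, w_m`.  If `λ_min` is the smallest non-zero eigenvalue of
the symmetric positive-semidefinite matrix `B * W * Bᵀ`, then
`min_j w_j * ((BᵀB)_{jj} - ∑_{i≠j} |(BᵀB)_{ij}|) ≤ λ_min ≤ min_j w_j * (BᵀB)_{jj}`. -/
theorem stmt13 {n m : ℕ} (B : Matrix (Fin n) (Fin m) ℝ) (hB : B ≠ 0)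
    (hind : LinearIndependent ℝ (fun j : Fin m => fun i : Fin n => B i j))
    (w : Fin m → ℝ) (hw : ∀ j, 0 < w j)
    (W : Matrix (Fin m) (Fin m) ℝ) (hW : W = Matrix.diagonal w)
    (lamMin : ℝ) (hne : lamMin ≠ 0)
    (heig : ∃ v : Fin n → ℝ, v ≠ 0 ∧ (B * W * B.transpose).mulVec v = lamMin • v)
    (hmin : ∀ μ : ℝ, μ ≠ 0 →
      (∃ v : Fin n → ℝ, v ≠ 0 ∧ (B * W * B.transpose).mulVec v = μ • v) → lamMin ≤ μ) :
    (∃ j : Fin m,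
      w j * ((B.transpose * B) j j -
        ∑ i ∈ Finset.univ.filter (fun i => i ≠ j), |(B.transpose * B) i j|) ≤ lamMin) ∧
    (∀ j : Fin m, lamMin ≤ w j * (B.transpose * B) j j) := by
  classical
  subst hW
  set G := B.transpose * B with hG
  have hGsymm : G.transpose = G := by
    rw [hG, Matrix.transpose_mul, Matrix.transpose_transpose]
  have hGsym : ∀ i j, G i j = G j i := fun i j => congrFun (congrFun hGsymm j) i
  -- B has trivial kernel
  have hBinj : ∀ x : Fin m → ℝ, B.mulVec x = 0 → x = 0 := by
    intro x hx
    have h2 : ∑ j, x j • (fun i : Fin n => B i j) = 0 := by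
      funext i
      have := congrFun hx i
      simpa [Matrix.mulVec, dotProduct, Finset.sum_apply, mul_comm] using this
    have h3 := Fintype.linearIndependent_iff.mp hind x h2
    funext i; exact h3 i
  -- G has trivial kernel
  have hGinj : ∀ y : Fin m → ℝ, G.mulVec y = 0 → y = 0 := by
    intro y hy
    have h1 : dotProduct (B.mulVec y) (B.mulVec y) = 0 := by
      have h0 : dotProduct y (G.mulVec y) = 0 := by rw [hy]; simp
      rw [hG, ← Matrix.mulVec_mulVec, Matrix.dotProduct_mulVec,
        Matrix.vecMul_transpose] at h0
      exact h0
    exact hBinj y (dotProduct_self_eq_zero.mp h1)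
  constructor
  · -- lower (Gershgorin) bound
    obtain ⟨v, hv0, hv⟩ := heig
    set u := B.transpose.mulVec v with hu_def
    have hu0 : u ≠ 0 := by
      intro h
      apply hne
      have h2 : (B * Matrix.diagonal w * B.transpose).mulVec v = 0 := by
        rw [← Matrix.mulVec_mulVec, ← hu_def, h, Matrix.mulVec_zero]
      rw [hv] at h2
      rcases smul_eq_zero.mp h2 with h | h
      · exact h
      · exact absurd h hv0
    have hmm : (G * Matrix.diagonal w) * B.transpose
        = B.transpose * (B * Matrix.diagonal w * B.transpose) := by
      rw [hG]; simp [Matrix.mul_assoc]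
    have huEig : (G * Matrix.diagonal w).mulVec u = lamMin • u := by
      rw [hu_def, Matrix.mulVec_mulVec, hmm, ← Matrix.mulVec_mulVec, hv,
        Matrix.mulVec_smul]
    have hdet : ((G * Matrix.diagonal w) - lamMin • 1).det = 0 := by
      rw [← Matrix.exists_mulVec_eq_zero_iff]
      refine ⟨u, hu0, ?_⟩
      rw [Matrix.sub_mulVec, huEig, Matrix.smul_mulVec, Matrix.one_mulVec, sub_self]
    have hdetT : ((Matrix.diagonal w * G) - lamMin • 1).det = 0 := by
      have hT : ((Matrix.diagonal w * G) - lamMin • (1 : Matrix (Fin m) (Fin m) ℝ))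
          = ((G * Matrix.diagonal w) - lamMin • 1).transpose := by
        rw [Matrix.transpose_sub, Matrix.transpose_mul, hGsymm, Matrix.diagonal_transpose,
          Matrix.transpose_smul, Matrix.transpose_one]
      rw [hT, Matrix.det_transpose]
      exact hdet
    obtain ⟨x, hx0, hx⟩ := Matrix.exists_mulVec_eq_zero_iff.mpr hdetT
    have hxEig : (Matrix.diagonal w * G).mulVec x = lamMin • x := by
      rw [Matrix.sub_mulVec, Matrix.smul_mulVec, Matrix.one_mulVec, sub_eq_zero] at hx
      exact hx
    obtain ⟨i0, hi0⟩ := Function.ne_iff.mp hx0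
    obtain ⟨j, -, hj⟩ := Finset.exists_max_image Finset.univ (fun i => |x i|)
      ⟨i0, Finset.mem_univ i0⟩
    have hxj : 0 < |x j| := lt_of_lt_of_le (abs_pos.mpr hi0) (hj i0 (Finset.mem_univ i0))
    refine ⟨j, ?_⟩
    have hrow : w j * ∑ i, G j i * x i = lamMin * x j := by
      have h1 := congrFun hxEig j
      have h2 : ((Matrix.diagonal w * G).mulVec x) j = ∑ i, w j * G j i * x i := by
        simp [Matrix.mulVec, dotProduct, Matrix.diagonal_mul]
      rw [h2] at h1
      rw [Finset.mul_sum]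
      simpa [mul_assoc] using h1
    have hsplit : ∑ i, G j i * x i
        = G j j * x j + ∑ i ∈ Finset.univ.erase j, G j i * x i := by
      rw [← Finset.add_sum_erase _ _ (Finset.mem_univ j)]
    have h1 : (lamMin - w j * G j j) * x j
        = w j * ∑ i ∈ Finset.univ.erase j, G j i * x i := by
      rw [hsplit, mul_add] at hrow
      ring_nf at hrow ⊢
      linarith
    have hb : |∑ i ∈ Finset.univ.erase j, G j i * x i|
        ≤ (∑ i ∈ Finset.univ.erase j, |G j i|) * |x j| := by
      calc |∑ i ∈ Finset.univ.erase j, G j i * x i|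
          ≤ ∑ i ∈ Finset.univ.erase j, |G j i * x i| :=
            Finset.abs_sum_le_sum_abs _ _
        _ ≤ ∑ i ∈ Finset.univ.erase j, |G j i| * |x j| :=
            Finset.sum_le_sum (fun i _ => by
              rw [abs_mul]
              exact mul_le_mul_of_nonneg_left (hj i (Finset.mem_univ i)) (abs_nonneg _))
        _ = (∑ i ∈ Finset.univ.erase j, |G j i|) * |x j| := by rw [Finset.sum_mul]
    have h2 : |lamMin - w j * G j j| * |x j|
        ≤ (w j * ∑ i ∈ Finset.univ.erase j, |G j i|) * |x j| := by
      rw [← abs_mul, h1, abs_mul, abs_of_pos (hw j), mul_assoc]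
      exact mul_le_mul_of_nonneg_left hb (le_of_lt (hw j))
    have h3 : |lamMin - w j * G j j| ≤ w j * ∑ i ∈ Finset.univ.erase j, |G j i| :=
      le_of_mul_le_mul_right h2 hxj
    have hsum_eq : ∑ i ∈ Finset.univ.filter (fun i => i ≠ j), |G i j|
        = ∑ i ∈ Finset.univ.erase j, |G j i| := by
      rw [Finset.filter_ne']
      exact Finset.sum_congr rfl (fun i _ => by rw [hGsym i j])
    rw [hsum_eq]
    have h4 := (abs_le.mp h3).1
    nlinarith [h4]
  · -- upper bound via the smallest eigenvalue of D*G*D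
    intro j
    set d : Fin m → ℝ := fun i => Real.sqrt (w i) with hd_def
    have hd0 : ∀ i, 0 < d i := fun i => Real.sqrt_pos.mpr (hw i)
    have hdd : ∀ i, d i * d i = w i := fun i => Real.mul_self_sqrt (hw i).le
    set D := Matrix.diagonal d with hD_def
    have hDD : D * D = Matrix.diagonal w := by
      rw [hD_def, Matrix.diagonal_mul_diagonal]
      exact congrArg _ (funext fun i => hdd i)
    have hDinj : ∀ z : Fin m → ℝ, D.mulVec z = 0 → z = 0 := by
      intro z hz
      funext i
      have h0 := congrFun hz i
      rw [hD_def, Matrix.mulVec_diagonal] at h0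
      have := mul_eq_zero.mp h0
      rcases this with h | h
      · exact absurd h (ne_of_gt (hd0 i))
      · exact h
    set S := D * G * D with hS_def
    have hDT : D.transpose = D := by
      rw [hD_def, Matrix.diagonal_transpose]
    have hSherm : S.IsHermitian := by
      have hT : S.transpose = S := by
        rw [hS_def]
        simp [Matrix.transpose_mul, hGsymm, hDT, Matrix.mul_assoc]
      rw [Matrix.IsHermitian, Matrix.conjTranspose_eq_transpose_of_trivial, hT]
    have hlam_le : ∀ k, lamMin ≤ hSherm.eigenvalues k := by
      intro k
      set vk : Fin m → ℝ := ⇑(hSherm.eigenvectorBasis k) with hvk_def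
      have hvkE : S.mulVec vk = hSherm.eigenvalues k • vk :=
        hSherm.mulVec_eigenvectorBasis k
      have hvk0 : vk ≠ 0 := by
        intro h
        apply hSherm.eigenvectorBasis.orthonormal.ne_zero k
        ext i
        exact congrFun h i
      have hDvk0 : D.mulVec vk ≠ 0 := by
        intro h
        exact hvk0 (hDinj _ h)
      have hμ0 : hSherm.eigenvalues k ≠ 0 := by
        intro h0
        have hz : S.mulVec vk = 0 := by rw [hvkE, h0, zero_smul]
        have hz2 : D.mulVec (G.mulVec (D.mulVec vk)) = 0 := by
          rw [Matrix.mulVec_mulVec, Matrix.mulVec_mulVec, ← hS_def]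
          exact hz
        exact hvk0 (hDinj _ (hGinj _ (hDinj _ hz2)))
      set y := B.mulVec (D.mulVec vk) with hy_def
      have hy0 : y ≠ 0 := by
        intro h
        exact hDvk0 (hBinj _ h)
      have hmat : B * Matrix.diagonal w * B.transpose * B * D = (B * D) * S := by
        rw [← hDD, hS_def, hG]
        simp [Matrix.mul_assoc]
      have hyE : (B * Matrix.diagonal w * B.transpose).mulVec y
          = hSherm.eigenvalues k • y := by
        rw [hy_def, Matrix.mulVec_mulVec, Matrix.mulVec_mulVec, hmat,
          ← Matrix.mulVec_mulVec, hvkE, Matrix.mulVec_smul, ← Matrix.mulVec_mulVec,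
          ← hy_def]
      exact hmin _ hμ0 ⟨y, hy0, hyE⟩
    have hSjj : lamMin ≤ S j j := by
      set U : Matrix (Fin m) (Fin m) ℝ :=
        (hSherm.eigenvectorUnitary : Matrix (Fin m) (Fin m) ℝ) with hU
      have h1 : U * star U = 1 :=
        Matrix.mem_unitaryGroup_iff.mp hSherm.eigenvectorUnitary.2
      have hrow1 : ∑ k, U j k * U j k = 1 := by
        have h2 := congrFun (congrFun h1 j) j
        simpa [Matrix.mul_apply, Matrix.star_apply, Matrix.one_apply] using h2
      have hentry : S j j = ∑ k, hSherm.eigenvalues k * (U j k * U j k) := by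
        have h3 := congrFun (congrFun hSherm.spectral_theorem j) j
        rw [h3, Unitary.conjStarAlgAut_apply, Matrix.mul_apply]
        refine Finset.sum_congr rfl (fun k _ => ?_)
        rw [Matrix.mul_diagonal, Matrix.star_apply]
        simp [hU, Matrix.IsHermitian.eigenvectorUnitary_apply, Function.comp]
        ring
      calc lamMin = ∑ k, lamMin * (U j k * U j k) := by
            rw [← Finset.mul_sum, hrow1, mul_one]
        _ ≤ ∑ k, hSherm.eigenvalues k * (U j k * U j k) :=
            Finset.sum_le_sum (fun k _ =>
              mul_le_mul_of_nonneg_right (hlam_le k) (mul_self_nonneg _))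
        _ = S j j := hentry.symm
    have hfin : S j j = w j * G j j := by
      rw [hS_def, Matrix.mul_diagonal, Matrix.diagonal_mul, ← hdd j]
      ring
    linarith [hSjj, hfin.symm.le, hfin.le]
end
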